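/- arXiv:2302.09954 — 5 statements merged into one kernel-verified Lean document; each statement's English description precedes it below -/
import Mathlib

section
/- Let T > 0. Let F11, F12 : [0,T] × [0,∞) → [0,∞) and G1 : [0,T] × [0,∞) → ℝ be continuous functions, with F11, F12 continuously differentiable on (0,T) × (0,∞), satisfying the null-form equation ∂_u F11 + ∂_v F12 = G1 on (0,T) × (0,∞), and satisfying the boundary condition F11(t,0) = F12(t,0) for all t ∈ [0,T]. Assume that ∫₀^∞ (F11 + F12)(0,r) dr and ∫₀^T ∫₀^∞ |G1(t,r)| dr dt are finite. Then there exists an absolute constant C > 0 (independent of T, F11, F12, G1) such that: (i) for every u ≤ T, the integral of F11 along the outgoing null ray t − r = u, namely ∫_{max(u,0)}^{T} F11(t, t−u) dt, is at most C·(∫₀^∞ (F11 + F12)(0,r) dr + ∫₀^T ∫₀^∞ |G1(t,r)| dr dt); and (ii) for every v ≥ 0, the integral of F12 along the incoming null ray t + r = v, namely ∫₀^{min(v,T)} F12(t, v−t) dt, is at most C·(∫₀^∞ (F11 + F12)(0,r) dr + ∫₀^T ∫₀^∞ |G1(t,r)| dr dt). -/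
open MeasureTheory Set Filter Topology


/-- Partial derivative in the first (time) variable. -/
noncomputable def pderivT {E : Type*} [NormedAddCommGroup E] [NormedSpace ℝ E]
    (f : ℝ → ℝ → E) (t r : ℝ) : E :=
  deriv (fun s => f s r) t

/-- Partial derivative in the second (radial) variable. -/
noncomputable def pderivR {E : Type*} [NormedAddCommGroup E] [NormedSpace ℝ E]
    (f : ℝ → ℝ → E) (t r : ℝ) : E :=
  deriv (f t) r

/-- Null derivative `∂_u = (1/2)(∂_t - ∂_r)`. -/
noncomputable def pderivU {E : Type*} [NormedAddCommGroup E] [NormedSpace ℝ E]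
    (f : ℝ → ℝ → E) (t r : ℝ) : E :=
  (2 : ℝ)⁻¹ • (pderivT f t r - pderivR f t r)

/-- Null derivative `∂_v = (1/2)(∂_t + ∂_r)`. -/
noncomputable def pderivV {E : Type*} [NormedAddCommGroup E] [NormedSpace ℝ E]
    (f : ℝ → ℝ → E) (t r : ℝ) : E :=
  (2 : ℝ)⁻¹ • (pderivT f t r + pderivR f t r)

lemma hasDerivAt_slice_t {f : ℝ×ℝ → ℝ} {U : Set (ℝ×ℝ)} (hU : IsOpen U)
    (hf : ContDiffOn ℝ 1 f U) {p : ℝ×ℝ} (hp : p ∈ U) :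
    HasDerivAt (fun s => f (s, p.2)) (fderiv ℝ f p (1,0)) p.1 := by
  have hdiff : DifferentiableAt ℝ f p :=
    (hf.differentiableOn one_ne_zero).differentiableAt (hU.mem_nhds hp)
  have h1 : HasFDerivAt f (fderiv ℝ f p) p := hdiff.hasFDerivAt
  have h2 : HasDerivAt (fun s : ℝ => (s, p.2)) ((1:ℝ),(0:ℝ)) p.1 :=
    (hasDerivAt_id p.1).prodMk (hasDerivAt_const _ _)
  have h1' : HasFDerivAt f (fderiv ℝ f p) (p.1, p.2) := by simpa using h1
  simpa [Function.comp_def] using h1'.comp_hasDerivAt p.1 h2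

lemma hasDerivAt_slice_r {f : ℝ×ℝ → ℝ} {U : Set (ℝ×ℝ)} (hU : IsOpen U)
    (hf : ContDiffOn ℝ 1 f U) {p : ℝ×ℝ} (hp : p ∈ U) :
    HasDerivAt (fun s => f (p.1, s)) (fderiv ℝ f p (0,1)) p.2 := by
  have hdiff : DifferentiableAt ℝ f p :=
    (hf.differentiableOn one_ne_zero).differentiableAt (hU.mem_nhds hp)
  have h1 : HasFDerivAt f (fderiv ℝ f p) p := hdiff.hasFDerivAt
  have h2 : HasDerivAt (fun s : ℝ => (p.1, s)) ((0:ℝ),(1:ℝ)) p.2 :=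
    (hasDerivAt_const _ _).prodMk (hasDerivAt_id p.2)
  have h1' : HasFDerivAt f (fderiv ℝ f p) (p.1, p.2) := by simpa using h1
  simpa [Function.comp_def] using h1'.comp_hasDerivAt p.2 h2

lemma continuousOn_fderiv_apply {f : ℝ×ℝ → ℝ} {U : Set (ℝ×ℝ)} (hU : IsOpen U)
    (hf : ContDiffOn ℝ 1 f U) (w : ℝ×ℝ) :
    ContinuousOn (fun p => fderiv ℝ f p w) U :=
  (hf.continuousOn_fderiv_of_isOpen hU le_rfl).clm_apply continuousOn_const

lemma indicator_slice (f : ℝ×ℝ → ℝ) (C : Set (ℝ×ℝ)) (t : ℝ) :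
    (fun r => C.indicator f (t, r)) = ({r | (t, r) ∈ C}).indicator (fun r => f (t, r)) := by
  funext r
  by_cases h : (t, r) ∈ C
  · simp [Set.indicator_of_mem, h]
  · simp [Set.indicator_of_notMem, h]

lemma setIntegral_inter_prod (f : ℝ×ℝ → ℝ) {a b c d : ℝ} {C : Set (ℝ×ℝ)}
    (hC : MeasurableSet C)
    (hf : IntegrableOn f (Icc a b ×ˢ Icc c d)) :
    ∫ p in (Icc a b ×ˢ Icc c d) ∩ C, f p
      = ∫ t in Icc a b, ∫ r in Icc c d ∩ {r | (t, r) ∈ C}, f (t, r) := by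
  rw [← setIntegral_indicator hC]
  rw [Measure.volume_eq_prod]
  rw [setIntegral_prod _ (hf.indicator hC)]
  congr 1
  funext t
  rw [indicator_slice f C t, setIntegral_indicator]
  exact measurable_prodMk_left hC

lemma setIntegral_inter_prod' (f : ℝ×ℝ → ℝ) {a b c d : ℝ} {C : Set (ℝ×ℝ)}
    (hC : MeasurableSet C)
    (hf : IntegrableOn f (Icc a b ×ˢ Icc c d)) :
    ∫ p in (Icc a b ×ˢ Icc c d) ∩ C, f p
      = ∫ r in Icc c d, ∫ t in Icc a b ∩ {t | (t, r) ∈ C}, f (t, r) := by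
  rw [← setIntegral_indicator hC]
  rw [Measure.volume_eq_prod]
  rw [setIntegral_prod _ (hf.indicator hC)]
  have hint : Integrable (Function.uncurry fun t r => C.indicator f (t, r))
      (((volume : Measure ℝ).restrict (Icc a b)).prod ((volume : Measure ℝ).restrict (Icc c d))) := by
    rw [Measure.prod_restrict]
    exact hf.indicator hC
  rw [integral_integral_swap hint]
  congr 1
  funext r
  have : (fun t => C.indicator f (t, r)) = ({t | (t, r) ∈ C}).indicator (fun t => f (t, r)) := by
    funext t
    by_cases h : (t, r) ∈ C
    · simp [Set.indicator_of_mem, h]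
    · simp [Set.indicator_of_notMem, h]
  rw [this, setIntegral_indicator]
  exact (measurable_prodMk_right (by exact hC) : _)

lemma key {T : ℝ} {F11 F12 G1 : ℝ → ℝ → ℝ} (hT : 0 < T)
    (h11 : ∀ t r, t ∈ Icc 0 T → r ∈ Ici (0 : ℝ) → 0 ≤ F11 t r)
    (h12 : ∀ t r, t ∈ Icc 0 T → r ∈ Ici (0 : ℝ) → 0 ≤ F12 t r)
    (hd11 : ContDiffOn ℝ 1 (fun p : ℝ × ℝ => F11 p.1 p.2) (Ioo 0 T ×ˢ Ioi 0))
    (hd12 : ContDiffOn ℝ 1 (fun p : ℝ × ℝ => F12 p.1 p.2) (Ioo 0 T ×ˢ Ioi 0))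
    (heq : ∀ t r, t ∈ Ioo 0 T → r ∈ Ioi (0 : ℝ) →
      pderivU F11 t r + pderivV F12 t r = G1 t r)
    (hIntG : IntegrableOn (fun p : ℝ × ℝ => G1 p.1 p.2) (Icc 0 T ×ˢ Ioi 0))
    (w v₁ ε : ℝ) (hε : 0 < ε)
    (hεb : ε ≤ min v₁ T - ε) (hv : 2 * (min v₁ T - ε) ≤ v₁ + w)
    (hρ : max w 0 - w + ε ≤ v₁ - (min v₁ T - ε)) :
    (∫ t in (min (max w 0 + ε) (min v₁ T - ε))..(min v₁ T - ε), F11 t (t - w))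
      + (∫ t in ε..(min v₁ T - ε), F12 t (v₁ - t))
    ≤ (∫ p in Icc (0 : ℝ) T ×ˢ Ioi (0 : ℝ), |G1 p.1 p.2|)
      + (∫ t in ε..(min (max w 0 + ε) (min v₁ T - ε)),
          (F12 t (max w 0 - w + ε) - F11 t (max w 0 - w + ε)) / 2)
      + ∫ r in (max w 0 - w + ε)..(v₁ - ε), (F11 ε r + F12 ε r) / 2 := by
  -- notation
  set Φ : ℝ × ℝ → ℝ := fun p => F11 p.1 p.2 with hΦ
  set Ψ : ℝ × ℝ → ℝ := fun p => F12 p.1 p.2 with hΨ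
  set U : Set (ℝ × ℝ) := Ioo 0 T ×ˢ Ioi 0 with hU
  have hUopen : IsOpen U := (isOpen_Ioo).prod isOpen_Ioi
  set Pf : ℝ × ℝ → ℝ := fun p => (Φ p + Ψ p) / 2 with hPf
  set Qf : ℝ × ℝ → ℝ := fun p => (Ψ p - Φ p) / 2 with hQf
  set PT : ℝ × ℝ → ℝ := fun p => (fderiv ℝ Φ p (1, 0) + fderiv ℝ Ψ p (1, 0)) / 2 with hPT
  set QR : ℝ × ℝ → ℝ := fun p => (fderiv ℝ Ψ p (0, 1) - fderiv ℝ Φ p (0, 1)) / 2 with hQR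
  set bt : ℝ := min v₁ T - ε with hbt
  set ρ : ℝ := max w 0 - w + ε with hρdef
  set c : ℝ := min (max w 0 + ε) bt with hc
  have hρpos : 0 < ρ := by
    have : w ≤ max w 0 := le_max_left _ _
    simp only [hρdef]; linarith
  have hbtT : bt < T := by
    have : min v₁ T ≤ T := min_le_right _ _
    simp only [hbt]; linarith
  have hεc : ε ≤ c := le_min (by linarith [le_max_right w 0]) hεb
  have hcbt : c ≤ bt := min_le_right _ _
  have hr2 : max (bt - w) ρ ≤ v₁ - bt := by
    apply max_le
    · linarith
    · exact hρ
  have hr3 : v₁ - bt ≤ v₁ - ε := by linarith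
  have hρr1 : ρ ≤ max (bt - w) ρ := le_max_right _ _
  -- membership helpers
  have hmemU : ∀ t r : ℝ, ε ≤ t → t ≤ bt → ρ ≤ r → (t, r) ∈ U := by
    intro t r h1 h2 h3
    refine ⟨⟨by linarith, by linarith⟩, by simp only [mem_Ioi]; linarith⟩
  have hmemX : ∀ t r : ℝ, 0 ≤ t → t ≤ T → 0 ≤ r → (t, r) ∈ Icc (0:ℝ) T ×ˢ Ici (0:ℝ) := by
    intro t r h1 h2 h3
    exact ⟨⟨h1, h2⟩, h3⟩
  -- derivative facts
  have hQRderiv : ∀ t r : ℝ, (t, r) ∈ U → HasDerivAt (fun s => Qf (t, s)) (QR (t, r)) r := by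
    intro t r hp
    have h1 := hasDerivAt_slice_r hUopen hd12 hp
    have h2 := hasDerivAt_slice_r hUopen hd11 hp
    simpa [hQf, hQR] using (h1.sub h2).div_const 2
  have hPTderiv : ∀ t r : ℝ, (t, r) ∈ U → HasDerivAt (fun s => Pf (s, r)) (PT (t, r)) t := by
    intro t r hp
    have h1 := hasDerivAt_slice_t hUopen hd11 hp
    have h2 := hasDerivAt_slice_t hUopen hd12 hp
    simpa [hPf, hPT] using (h1.add h2).div_const 2
  have hQRcont : ContinuousOn QR U :=
    ((continuousOn_fderiv_apply hUopen hd12 (0,1)).sub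
      (continuousOn_fderiv_apply hUopen hd11 (0,1))).div_const 2
  have hPTcont : ContinuousOn PT U :=
    ((continuousOn_fderiv_apply hUopen hd11 (1,0)).add
      (continuousOn_fderiv_apply hUopen hd12 (1,0))).div_const 2
  have hPfcont : ContinuousOn Pf U :=
    ((hd11.continuousOn).add (hd12.continuousOn)).div_const 2
  have hQfcont : ContinuousOn Qf U :=
    ((hd12.continuousOn).sub (hd11.continuousOn)).div_const 2
  -- the equation
  have hlink : ∀ p : ℝ × ℝ, p ∈ U → PT p + QR p = G1 p.1 p.2 := by
    intro p hp
    have h1 : pderivT F11 p.1 p.2 = fderiv ℝ Φ p (1, 0) :=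
      (hasDerivAt_slice_t hUopen hd11 hp).deriv
    have h2 : pderivR F11 p.1 p.2 = fderiv ℝ Φ p (0, 1) :=
      (hasDerivAt_slice_r hUopen hd11 hp).deriv
    have h3 : pderivT F12 p.1 p.2 = fderiv ℝ Ψ p (1, 0) :=
      (hasDerivAt_slice_t hUopen hd12 hp).deriv
    have h4 : pderivR F12 p.1 p.2 = fderiv ℝ Ψ p (0, 1) :=
      (hasDerivAt_slice_r hUopen hd12 hp).deriv
    have := heq p.1 p.2 hp.1 hp.2
    rw [pderivU, pderivV, h1, h2, h3, h4] at this
    simp only [smul_eq_mul] at this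
    simp only [hPT, hQR]
    linarith
  -- region
  set Cn : Set (ℝ × ℝ) := {p : ℝ × ℝ | p.1 - w ≤ p.2 ∧ p.1 + p.2 ≤ v₁} with hCn
  have hCmeas : MeasurableSet Cn := by
    have : Cn = {p : ℝ × ℝ | p.1 - w ≤ p.2} ∩ {p : ℝ × ℝ | p.1 + p.2 ≤ v₁} := rfl
    rw [this]
    exact ((isClosed_le (by fun_prop) (by fun_prop)).measurableSet).inter
      ((isClosed_le (by fun_prop) (by fun_prop)).measurableSet)
  have hSsub : Icc ε bt ×ˢ Icc ρ (v₁ - ε) ⊆ U := by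
    rintro ⟨t, r⟩ ⟨⟨ht1, ht2⟩, ⟨hr1, _⟩⟩
    exact hmemU t r ht1 ht2 hr1
  have hScomp : IsCompact (Icc ε bt ×ˢ Icc ρ (v₁ - ε)) := isCompact_Icc.prod isCompact_Icc
  have hPT_S : IntegrableOn PT (Icc ε bt ×ˢ Icc ρ (v₁ - ε)) :=
    (hPTcont.mono hSsub).integrableOn_compact hScomp
  have hQR_S : IntegrableOn QR (Icc ε bt ×ˢ Icc ρ (v₁ - ε)) :=
    (hQRcont.mono hSsub).integrableOn_compact hScomp
  have hDmeas : MeasurableSet ((Icc ε bt ×ˢ Icc ρ (v₁ - ε)) ∩ Cn) :=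
    (measurableSet_Icc.prod measurableSet_Icc).inter hCmeas
  have hPT_D : IntegrableOn PT ((Icc ε bt ×ˢ Icc ρ (v₁ - ε)) ∩ Cn) :=
    hPT_S.mono_set inter_subset_left
  have hQR_D : IntegrableOn QR ((Icc ε bt ×ˢ Icc ρ (v₁ - ε)) ∩ Cn) :=
    hQR_S.mono_set inter_subset_left
  have hDsubX : (Icc ε bt ×ˢ Icc ρ (v₁ - ε)) ∩ Cn ⊆ Icc (0:ℝ) T ×ˢ Ioi (0:ℝ) := by
    rintro ⟨t, r⟩ ⟨⟨⟨ht1, ht2⟩, ⟨hr1, _⟩⟩, _⟩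
    exact ⟨⟨by linarith, by linarith⟩, by simp only [mem_Ioi]; linarith⟩
  -- step A : the divergence identity on D
  have hsum_eq : (∫ p in (Icc ε bt ×ˢ Icc ρ (v₁ - ε)) ∩ Cn, (PT p + QR p))
      = ∫ p in (Icc ε bt ×ˢ Icc ρ (v₁ - ε)) ∩ Cn, G1 p.1 p.2 :=
    setIntegral_congr_fun hDmeas (fun p hp => hlink p (hSsub hp.1))
  have hsplit : (∫ p in (Icc ε bt ×ˢ Icc ρ (v₁ - ε)) ∩ Cn, (PT p + QR p))
      = (∫ p in (Icc ε bt ×ˢ Icc ρ (v₁ - ε)) ∩ Cn, PT p)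
        + ∫ p in (Icc ε bt ×ˢ Icc ρ (v₁ - ε)) ∩ Cn, QR p :=
    integral_add hPT_D hQR_D
  have hG_D : IntegrableOn (fun p : ℝ × ℝ => G1 p.1 p.2) ((Icc ε bt ×ˢ Icc ρ (v₁ - ε)) ∩ Cn) :=
    hIntG.mono_set hDsubX
  have hGbound : (∫ p in (Icc ε bt ×ˢ Icc ρ (v₁ - ε)) ∩ Cn, G1 p.1 p.2)
      ≤ ∫ p in Icc (0:ℝ) T ×ˢ Ioi (0:ℝ), |G1 p.1 p.2| := by
    calc (∫ p in (Icc ε bt ×ˢ Icc ρ (v₁ - ε)) ∩ Cn, G1 p.1 p.2)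
        ≤ ∫ p in (Icc ε bt ×ˢ Icc ρ (v₁ - ε)) ∩ Cn, |G1 p.1 p.2| :=
          integral_mono hG_D hG_D.abs (fun p => le_abs_self _)
      _ ≤ ∫ p in Icc (0:ℝ) T ×ˢ Ioi (0:ℝ), |G1 p.1 p.2| :=
          setIntegral_mono_set hIntG.abs
            (Filter.Eventually.of_forall (fun p => abs_nonneg _))
            (HasSubset.Subset.eventuallyLE hDsubX)
  -- step C : iterated integral of QR
  have hQRiter : (∫ p in (Icc ε bt ×ˢ Icc ρ (v₁ - ε)) ∩ Cn, QR p)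
      = ∫ t in Icc ε bt, (Qf (t, v₁ - t) - Qf (t, max (t - w) ρ)) := by
    rw [setIntegral_inter_prod QR hCmeas hQR_S]
    apply setIntegral_congr_fun measurableSet_Icc
    intro t ht
    dsimp only
    rw [mem_Icc] at ht
    have hle : max (t - w) ρ ≤ v₁ - t := by
      apply max_le
      · linarith
      · linarith [hρ, ht.2]
    have hseteq : Icc ρ (v₁ - ε) ∩ {r : ℝ | (t, r) ∈ Cn} = Icc (max (t - w) ρ) (v₁ - t) := by
      ext r
      simp only [hCn, mem_inter_iff, mem_Icc, mem_setOf_eq, max_le_iff]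
      constructor
      · rintro ⟨⟨h1, h2⟩, h3, h4⟩
        exact ⟨⟨by linarith, h1⟩, by linarith⟩
      · rintro ⟨⟨h1, h2⟩, h3⟩
        exact ⟨⟨h2, by linarith [ht.1]⟩, by linarith, by linarith⟩
    rw [hseteq, integral_Icc_eq_integral_Ioc, ← intervalIntegral.integral_of_le hle]
    have hmaps : ∀ r ∈ uIcc (max (t - w) ρ) (v₁ - t), (t, r) ∈ U := by
      intro r hr
      rw [uIcc_of_le hle, mem_Icc] at hr
      exact hmemU t r ht.1 ht.2 (le_trans (le_max_right _ _) hr.1)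
    exact intervalIntegral.integral_eq_sub_of_hasDerivAt (f := fun r => Qf (t, r))
      (fun r hr => hQRderiv t r (hmaps r hr))
      (ContinuousOn.intervalIntegrable (hQRcont.comp ((Continuous.prodMk_right t).continuousOn) hmaps))
  -- step D : iterated integral of PT
  have hPTiter : (∫ p in (Icc ε bt ×ˢ Icc ρ (v₁ - ε)) ∩ Cn, PT p)
      = ∫ r in Icc ρ (v₁ - ε), (Pf (min (min bt (w + r)) (v₁ - r), r) - Pf (ε, r)) := by
    rw [setIntegral_inter_prod' PT hCmeas hPT_S]
    apply setIntegral_congr_fun measurableSet_Icc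
    intro r hr
    dsimp only
    rw [mem_Icc] at hr
    have hle : ε ≤ min (min bt (w + r)) (v₁ - r) := by
      refine le_min (le_min hεb ?_) ?_
      · linarith [le_max_right w 0, hr.1, hρdef.ge, hρdef.le]
      · linarith [hr.2]
    have hseteq : Icc ε bt ∩ {t : ℝ | (t, r) ∈ Cn} = Icc ε (min (min bt (w + r)) (v₁ - r)) := by
      ext t
      simp only [hCn, mem_inter_iff, mem_Icc, mem_setOf_eq, le_min_iff]
      constructor
      · rintro ⟨⟨h1, h2⟩, h3, h4⟩
        exact ⟨h1, ⟨h2, by linarith⟩, by linarith⟩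
      · rintro ⟨h1, ⟨h2, h3⟩, h4⟩
        exact ⟨⟨h1, h2⟩, by linarith, by linarith⟩
    rw [hseteq, integral_Icc_eq_integral_Ioc, ← intervalIntegral.integral_of_le hle]
    have hmaps : ∀ t ∈ uIcc ε (min (min bt (w + r)) (v₁ - r)), (t, r) ∈ U := by
      intro t htm
      rw [uIcc_of_le hle, mem_Icc] at htm
      exact hmemU t r htm.1 (le_trans htm.2 (le_trans (min_le_left _ _) (min_le_left _ _))) hr.1
    have hcurve : Continuous (fun t : ℝ => (t, r)) := by fun_prop
    exact intervalIntegral.integral_eq_sub_of_hasDerivAt (f := fun t => Pf (t, r))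
      (fun t htm => hPTderiv t r (hmaps t htm))
      (ContinuousOn.intervalIntegrable (hPTcont.comp hcurve.continuousOn hmaps))
  -- continuity of the 1-D integrands
  have hρv : ρ ≤ v₁ - ε := le_trans hρ hr3
  have hQfv : ContinuousOn (fun t => Qf (t, v₁ - t)) (Icc ε bt) := by
    apply hQfcont.comp (by fun_prop : Continuous (fun t : ℝ => (t, v₁ - t))).continuousOn
    intro t ht
    rw [mem_Icc] at ht
    exact hmemU t (v₁ - t) ht.1 ht.2 (by linarith [ht.2, hρ])
  have hQfg : ContinuousOn (fun t => Qf (t, max (t - w) ρ)) (Icc ε bt) := by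
    apply hQfcont.comp (by fun_prop : Continuous (fun t : ℝ => (t, max (t - w) ρ))).continuousOn
    intro t ht
    rw [mem_Icc] at ht
    exact hmemU t _ ht.1 ht.2 (le_max_right _ _)
  have hPfv : ContinuousOn (fun t => Pf (t, v₁ - t)) (Icc ε bt) := by
    apply hPfcont.comp (by fun_prop : Continuous (fun t : ℝ => (t, v₁ - t))).continuousOn
    intro t ht
    rw [mem_Icc] at ht
    exact hmemU t (v₁ - t) ht.1 ht.2 (by linarith [ht.2, hρ])
  have hPfβ : ContinuousOn (fun r => Pf (min (min bt (w + r)) (v₁ - r), r)) (Icc ρ (v₁ - ε)) := by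
    apply hPfcont.comp
      (by fun_prop : Continuous (fun r : ℝ => (min (min bt (w + r)) (v₁ - r), r))).continuousOn
    intro r hr
    rw [mem_Icc] at hr
    have h1 : ε ≤ min (min bt (w + r)) (v₁ - r) := by
      refine le_min (le_min hεb ?_) ?_
      · linarith [le_max_right w 0, hr.1, hρdef.le, hρdef.ge]
      · linarith [hr.2]
    exact hmemU _ r h1 (le_trans (min_le_left _ _) (min_le_left _ _)) hr.1
  have hPfε : ContinuousOn (fun r => Pf (ε, r)) (Icc ρ (v₁ - ε)) := by
    apply hPfcont.comp (by fun_prop : Continuous (fun r : ℝ => (ε, r))).continuousOn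
    intro r hr
    rw [mem_Icc] at hr
    exact hmemU ε r le_rfl hεb hr.1
  -- convert the QR iterated integral to interval integrals and split
  have hQR2 : (∫ t in Icc ε bt, (Qf (t, v₁ - t) - Qf (t, max (t - w) ρ)))
      = (∫ t in ε..bt, Qf (t, v₁ - t)) - ∫ t in ε..bt, Qf (t, max (t - w) ρ) := by
    rw [integral_Icc_eq_integral_Ioc, ← intervalIntegral.integral_of_le hεb]
    exact intervalIntegral.integral_sub
      ((hQfv.mono (by rw [uIcc_of_le hεb])).intervalIntegrable)
      ((hQfg.mono (by rw [uIcc_of_le hεb])).intervalIntegrable)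
  have hQg_split : (∫ t in ε..bt, Qf (t, max (t - w) ρ))
      = (∫ t in ε..c, Qf (t, ρ)) + ∫ t in c..bt, Qf (t, t - w) := by
    have hI1 : IntervalIntegrable (fun t => Qf (t, max (t - w) ρ)) volume ε c :=
      (hQfg.mono (by rw [uIcc_of_le hεc]; exact Icc_subset_Icc le_rfl hcbt)).intervalIntegrable
    have hI2 : IntervalIntegrable (fun t => Qf (t, max (t - w) ρ)) volume c bt :=
      (hQfg.mono (by rw [uIcc_of_le hcbt]; exact Icc_subset_Icc hεc le_rfl)).intervalIntegrable
    rw [← intervalIntegral.integral_add_adjacent_intervals hI1 hI2]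
    congr 1
    · apply intervalIntegral.integral_congr
      intro t ht
      rw [uIcc_of_le hεc, mem_Icc] at ht
      have : t - w ≤ ρ := by
        have : t ≤ max w 0 + ε := le_trans ht.2 (min_le_left _ _)
        linarith [hρdef.le, hρdef.ge]
      simp [max_eq_right this]
    · rcases le_or_gt (max w 0 + ε) bt with hcase | hcase
      · have hcc : c = max w 0 + ε := min_eq_left hcase
        apply intervalIntegral.integral_congr
        intro t ht
        rw [uIcc_of_le hcbt, mem_Icc] at ht
        have : ρ ≤ t - w := by
          have : max w 0 + ε ≤ t := by rw [← hcc]; exact ht.1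
          linarith [hρdef.le, hρdef.ge]
        simp [max_eq_left this]
      · have hcc : c = bt := min_eq_right (le_of_lt hcase)
        rw [hcc]
        simp [intervalIntegral.integral_same]
  -- convert the PT iterated integral to interval integrals and split
  have hPT2 : (∫ r in Icc ρ (v₁ - ε), (Pf (min (min bt (w + r)) (v₁ - r), r) - Pf (ε, r)))
      = (∫ r in ρ..(v₁ - ε), Pf (min (min bt (w + r)) (v₁ - r), r))
        - ∫ r in ρ..(v₁ - ε), Pf (ε, r) := by
    rw [integral_Icc_eq_integral_Ioc, ← intervalIntegral.integral_of_le hρv]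
    exact intervalIntegral.integral_sub
      ((hPfβ.mono (by rw [uIcc_of_le hρv])).intervalIntegrable)
      ((hPfε.mono (by rw [uIcc_of_le hρv])).intervalIntegrable)
  have hr1r2 : max (bt - w) ρ ≤ v₁ - bt := hr2
  have hPβ_split : (∫ r in ρ..(v₁ - ε), Pf (min (min bt (w + r)) (v₁ - r), r))
      = (∫ r in ρ..(max (bt - w) ρ), Pf (min (min bt (w + r)) (v₁ - r), r))
        + ((∫ r in (max (bt - w) ρ)..(v₁ - bt), Pf (min (min bt (w + r)) (v₁ - r), r))
          + ∫ r in (v₁ - bt)..(v₁ - ε), Pf (min (min bt (w + r)) (v₁ - r), r)) := by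
    have hI1 : IntervalIntegrable (fun r => Pf (min (min bt (w + r)) (v₁ - r), r)) volume ρ (max (bt - w) ρ) :=
      (hPfβ.mono (by rw [uIcc_of_le hρr1]; exact Icc_subset_Icc le_rfl (le_trans hr2 hr3))).intervalIntegrable
    have hI2 : IntervalIntegrable (fun r => Pf (min (min bt (w + r)) (v₁ - r), r)) volume (max (bt - w) ρ) (v₁ - bt) :=
      (hPfβ.mono (by rw [uIcc_of_le hr2]; exact Icc_subset_Icc hρr1 hr3)).intervalIntegrable
    have hI3 : IntervalIntegrable (fun r => Pf (min (min bt (w + r)) (v₁ - r), r)) volume (v₁ - bt) (v₁ - ε) :=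
      (hPfβ.mono (by rw [uIcc_of_le hr3]; exact Icc_subset_Icc (le_trans hρr1 hr2) le_rfl)).intervalIntegrable
    rw [intervalIntegral.integral_add_adjacent_intervals hI2 hI3,
      intervalIntegral.integral_add_adjacent_intervals hI1 (hI2.trans hI3)]
  have hPiece1 : (∫ r in ρ..(max (bt - w) ρ), Pf (min (min bt (w + r)) (v₁ - r), r))
      = ∫ t in c..bt, Pf (t, t - w) := by
    rcases le_or_gt ρ (bt - w) with hcase | hcase
    · have hm : max (bt - w) ρ = bt - w := max_eq_left hcase
      have hcc : c = max w 0 + ε := min_eq_left (by linarith [hρdef.le, hρdef.ge])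
      have step1 : (∫ r in ρ..(max (bt - w) ρ), Pf (min (min bt (w + r)) (v₁ - r), r))
          = ∫ r in ρ..(bt - w), Pf (w + r, (w + r) - w) := by
        rw [hm]
        apply intervalIntegral.integral_congr
        intro r hr
        rw [uIcc_of_le hcase, mem_Icc] at hr
        dsimp only
        have h1 : w + r ≤ bt := by linarith [hr.2]
        have h2 : w + r ≤ v₁ - r := by linarith [hr.2, hv]
        rw [min_eq_right h1, min_eq_left h2]
        simp
      rw [step1]
      have := intervalIntegral.integral_comp_add_left (a := ρ) (b := bt - w)
        (fun t => Pf (t, t - w)) w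
      rw [this]
      congr 1
      · rw [hcc]; linarith [hρdef.le, hρdef.ge]
      · ring
    · have hm : max (bt - w) ρ = ρ := max_eq_right (le_of_lt hcase)
      have hcc : c = bt := min_eq_right (by linarith [hρdef.le, hρdef.ge])
      rw [hm, hcc]
      simp [intervalIntegral.integral_same]
  have hPiece2 : 0 ≤ ∫ r in (max (bt - w) ρ)..(v₁ - bt), Pf (min (min bt (w + r)) (v₁ - r), r) := by
    apply intervalIntegral.integral_nonneg hr2
    intro r hr
    rw [mem_Icc] at hr
    have h1 : min (min bt (w + r)) (v₁ - r) = bt := by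
      rw [min_eq_left (by linarith [hr.1, le_max_left (bt - w) ρ] : bt ≤ w + r),
        min_eq_left (by linarith [hr.2] : bt ≤ v₁ - r)]
    rw [h1]
    have hx : (bt, r) ∈ Icc (0:ℝ) T ×ˢ Ici (0:ℝ) :=
      hmemX bt r (by linarith) (by linarith) (by linarith [hr.1, le_max_right (bt - w) ρ, hρpos])
    have := h11 bt r hx.1 hx.2
    have := h12 bt r hx.1 hx.2
    simp only [hPf, hΦ, hΨ]
    positivity
  have hPiece3 : (∫ r in (v₁ - bt)..(v₁ - ε), Pf (min (min bt (w + r)) (v₁ - r), r))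
      = ∫ t in ε..bt, Pf (t, v₁ - t) := by
    have step1 : (∫ r in (v₁ - bt)..(v₁ - ε), Pf (min (min bt (w + r)) (v₁ - r), r))
        = ∫ r in (v₁ - bt)..(v₁ - ε), Pf (v₁ - r, v₁ - (v₁ - r)) := by
      apply intervalIntegral.integral_congr
      intro r hr
      rw [uIcc_of_le hr3, mem_Icc] at hr
      dsimp only
      have h1 : v₁ - r ≤ bt := by linarith [hr.1]
      have h2 : v₁ - r ≤ w + r := by linarith [hr.1, hv]
      rw [min_eq_right (le_min h1 h2)]
      simp
    rw [step1]
    have := intervalIntegral.integral_comp_sub_left (a := v₁ - bt) (b := v₁ - ε)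
      (fun t => Pf (t, v₁ - t)) v₁
    rw [this]
    congr 1 <;> ring
  -- recombine into F11 and F12
  have hF11 : (∫ t in c..bt, Pf (t, t - w)) - (∫ t in c..bt, Qf (t, t - w))
      = ∫ t in c..bt, F11 t (t - w) := by
    rcases le_or_gt (max w 0 + ε) bt with hcase | hcase
    · have hcc : c = max w 0 + ε := min_eq_left hcase
      have hmaps : ∀ t ∈ Icc c bt, (t, t - w) ∈ U := by
        intro t ht
        rw [mem_Icc] at ht
        refine hmemU t (t - w) (le_trans hεc ht.1) ht.2 ?_
        have : max w 0 + ε ≤ t := by rw [← hcc]; exact ht.1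
        linarith [hρdef.le, hρdef.ge]
      have hcurve : Continuous (fun t : ℝ => (t, t - w)) := by fun_prop
      have hPk : ContinuousOn (fun t => Pf (t, t - w)) (Icc c bt) :=
        hPfcont.comp hcurve.continuousOn hmaps
      have hQk : ContinuousOn (fun t => Qf (t, t - w)) (Icc c bt) :=
        hQfcont.comp hcurve.continuousOn hmaps
      rw [← intervalIntegral.integral_sub
        ((hPk.mono (by rw [uIcc_of_le hcbt])).intervalIntegrable)
        ((hQk.mono (by rw [uIcc_of_le hcbt])).intervalIntegrable)]
      apply intervalIntegral.integral_congr
      intro t ht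
      simp only [hPf, hQf, hΦ, hΨ]
      ring
    · have hcc : c = bt := min_eq_right (le_of_lt hcase)
      rw [hcc]
      simp [intervalIntegral.integral_same]
  have hF12 : (∫ t in ε..bt, Qf (t, v₁ - t)) + (∫ t in ε..bt, Pf (t, v₁ - t))
      = ∫ t in ε..bt, F12 t (v₁ - t) := by
    rw [← intervalIntegral.integral_add
      ((hQfv.mono (by rw [uIcc_of_le hεb])).intervalIntegrable)
      ((hPfv.mono (by rw [uIcc_of_le hεb])).intervalIntegrable)]
    apply intervalIntegral.integral_congr
    intro t ht
    simp only [hPf, hQf, hΦ, hΨ]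
    ring
  -- identify boundary data integrals with the statement's integrands
  have hQρ_eq : (∫ t in ε..c, Qf (t, ρ)) = ∫ t in ε..c, (F12 t ρ - F11 t ρ) / 2 := rfl
  have hPε_eq : (∫ r in ρ..(v₁ - ε), Pf (ε, r)) = ∫ r in ρ..(v₁ - ε), (F11 ε r + F12 ε r) / 2 := rfl
  -- final assembly
  have hkeyid : (∫ t in c..bt, F11 t (t - w)) + (∫ t in ε..bt, F12 t (v₁ - t))
      + (∫ r in (max (bt - w) ρ)..(v₁ - bt), Pf (min (min bt (w + r)) (v₁ - r), r))
      = (∫ p in (Icc ε bt ×ˢ Icc ρ (v₁ - ε)) ∩ Cn, G1 p.1 p.2)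
        + (∫ t in ε..c, Qf (t, ρ)) + ∫ r in ρ..(v₁ - ε), Pf (ε, r) := by
    have e1 := hsum_eq
    rw [hsplit, hQRiter, hPTiter, hQR2, hQg_split, hPT2, hPβ_split, hPiece1, hPiece3] at e1
    linarith [hF11, hF12]
  linarith [hkeyid, hGbound, hPiece2, hQρ_eq.le, hQρ_eq.ge, hPε_eq.le, hPε_eq.ge]



lemma ae_ne_restrict (s : Set ℝ) (x : ℝ) : ∀ᵐ r ∂(volume.restrict s), r ≠ x := by
  apply ae_restrict_of_ae
  have h : ({r : ℝ | ¬ r ≠ x} : Set ℝ) = {x} := by ext y; simp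
  rw [ae_iff, h]
  exact Real.volume_singleton

lemma tendsto_cont_seq {F : ℝ × ℝ → ℝ} {X : Set (ℝ × ℝ)} (hF : ContinuousOn F X)
    {p : ℝ × ℝ} (hp : p ∈ X) {q : ℕ → ℝ × ℝ} (hq : Tendsto q atTop (𝓝 p))
    (hqX : ∀ n, q n ∈ X) :
    Tendsto (fun n => F (q n)) atTop (𝓝 (F p)) :=
  ((hF p hp).tendsto).comp (tendsto_nhdsWithin_iff.mpr ⟨hq, Eventually.of_forall hqX⟩)

lemma eseq_tendsto (K : ℝ) : Tendsto (fun n : ℕ => K / ((n : ℝ) + 3)) atTop (𝓝 0) := by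
  apply Tendsto.div_atTop (tendsto_const_nhds)
  exact tendsto_atTop_add_const_right _ 3 tendsto_natCast_atTop_atTop

lemma tendsto_DC (H : ℕ → ℝ → ℝ) (Hoo : ℝ → ℝ) (α β : ℝ) (a b : ℕ → ℝ)
    (hab : ∀ n, α ≤ a n ∧ b n ≤ β) (hle : ∀ n, a n ≤ b n)
    (hmeas : ∀ n, AEStronglyMeasurable (H n) (volume.restrict (Ioc α β)))
    (M : ℝ) (hM : 0 ≤ M) (hbdd : ∀ n, ∀ r ∈ Ioc α β, |H n r| ≤ M)
    (hlim : ∀ᵐ r ∂(volume.restrict (Ioc α β)),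
      Tendsto (fun n => (Ioc (a n) (b n)).indicator (H n) r) atTop (𝓝 (Hoo r))) :
    Tendsto (fun n => ∫ r in (a n)..(b n), H n r) atTop (𝓝 (∫ r in Ioc α β, Hoo r)) := by
  have heq : ∀ n, (∫ r in (a n)..(b n), H n r)
      = ∫ r in Ioc α β, (Ioc (a n) (b n)).indicator (H n) r := by
    intro n
    rw [intervalIntegral.integral_of_le (hle n), setIntegral_indicator measurableSet_Ioc,
      inter_eq_self_of_subset_right (Ioc_subset_Ioc (hab n).1 (hab n).2)]
  apply Filter.Tendsto.congr (fun n => (heq n).symm)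
  apply tendsto_integral_of_dominated_convergence (fun _ => M)
  · exact fun n => ((hmeas n).indicator measurableSet_Ioc)
  · exact integrableOn_const measure_Ioc_lt_top.ne
  · intro n
    rw [ae_restrict_iff' measurableSet_Ioc]
    apply Eventually.of_forall
    intro r hr
    by_cases h : r ∈ Ioc (a n) (b n)
    · rw [Set.indicator_of_mem h]
      rw [Real.norm_eq_abs]
      exact hbdd n r hr
    · rw [Set.indicator_of_notMem h]
      simpa using hM
  · exact hlim


lemma wrapper_v {T : ℝ} {F11 F12 G1 : ℝ → ℝ → ℝ} (hT : 0 < T)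
    (h11 : ∀ t r, t ∈ Icc 0 T → r ∈ Ici (0 : ℝ) → 0 ≤ F11 t r)
    (h12 : ∀ t r, t ∈ Icc 0 T → r ∈ Ici (0 : ℝ) → 0 ≤ F12 t r)
    (hc11 : ContinuousOn (fun p : ℝ × ℝ => F11 p.1 p.2) (Icc 0 T ×ˢ Ici 0))
    (hc12 : ContinuousOn (fun p : ℝ × ℝ => F12 p.1 p.2) (Icc 0 T ×ˢ Ici 0))
    (hd11 : ContDiffOn ℝ 1 (fun p : ℝ × ℝ => F11 p.1 p.2) (Ioo 0 T ×ˢ Ioi 0))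
    (hd12 : ContDiffOn ℝ 1 (fun p : ℝ × ℝ => F12 p.1 p.2) (Ioo 0 T ×ˢ Ioi 0))
    (heq : ∀ t r, t ∈ Ioo 0 T → r ∈ Ioi (0 : ℝ) →
      pderivU F11 t r + pderivV F12 t r = G1 t r)
    (hbc : ∀ t ∈ Icc (0 : ℝ) T, F11 t 0 = F12 t 0)
    (hInt : IntegrableOn (fun r => F11 0 r + F12 0 r) (Ioi 0))
    (hIntG : IntegrableOn (fun p : ℝ × ℝ => G1 p.1 p.2) (Icc 0 T ×ˢ Ioi 0))
    (v : ℝ) (hv : 0 ≤ v) :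
    (∫ t in (0 : ℝ)..min v T, F12 t (v - t)) ≤
      1 * ((∫ r in Ioi (0 : ℝ), (F11 0 r + F12 0 r)) +
        ∫ p in Icc (0 : ℝ) T ×ˢ Ioi (0 : ℝ), |G1 p.1 p.2|) := by
  have hI0 : 0 ≤ ∫ r in Ioi (0 : ℝ), (F11 0 r + F12 0 r) :=
    setIntegral_nonneg measurableSet_Ioi (fun r hr =>
      add_nonneg (h11 0 r ⟨le_rfl, hT.le⟩ (mem_Ici.mpr (le_of_lt (mem_Ioi.mp hr)))) (h12 0 r ⟨le_rfl, hT.le⟩ (mem_Ici.mpr (le_of_lt (mem_Ioi.mp hr)))))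
  have hIG : 0 ≤ ∫ p in Icc (0 : ℝ) T ×ˢ Ioi (0 : ℝ), |G1 p.1 p.2| :=
    setIntegral_nonneg (measurableSet_Icc.prod measurableSet_Ioi) (fun p _ => abs_nonneg _)
  rcases le_or_gt (min v T) 0 with hm | hm
  · have hm0 : min v T = 0 := le_antisymm hm (le_min hv hT.le)
    rw [hm0, intervalIntegral.integral_same]
    linarith
  · set e : ℕ → ℝ := fun n => min v T / ((n : ℝ) + 3) with he_def
    have he_pos : ∀ n, 0 < e n := fun n => by
      have : (0:ℝ) < (n : ℝ) + 3 := by positivity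
      exact div_pos hm this
    have he_le3 : ∀ n, 3 * e n ≤ min v T := by
      intro n
      have h3 : (3 : ℝ) ≤ (n : ℝ) + 3 := le_add_of_nonneg_left (Nat.cast_nonneg n)
      have := div_le_div_of_nonneg_left hm.le (by norm_num : (0:ℝ) < 3) h3
      calc 3 * e n ≤ 3 * (min v T / 3) := by
            apply mul_le_mul_of_nonneg_left _ (by norm_num)
            simpa [he_def] using this
        _ = min v T := by ring
    have he0 : Tendsto e atTop (𝓝 0) := eseq_tendsto (min v T)
    have hmv : min v T ≤ v := min_le_left _ _
    have hmT : min v T ≤ T := min_le_right _ _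
    -- compact bounds
    have hKsub : Icc (0:ℝ) T ×ˢ Icc (0:ℝ) v ⊆ Icc (0:ℝ) T ×ˢ Ici (0:ℝ) :=
      prod_mono_right Icc_subset_Ici_self
    have hKcomp : IsCompact (Icc (0:ℝ) T ×ˢ Icc (0:ℝ) v) := isCompact_Icc.prod isCompact_Icc
    obtain ⟨M1, hM1⟩ := hKcomp.exists_bound_of_continuousOn (hc11.mono hKsub)
    obtain ⟨M2, hM2⟩ := hKcomp.exists_bound_of_continuousOn (hc12.mono hKsub)
    have hM1n : 0 ≤ M1 :=
      le_trans (norm_nonneg _) (hM1 (0,0) ⟨⟨le_rfl, hT.le⟩, ⟨le_rfl, hv⟩⟩)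
    have hM2n : 0 ≤ M2 :=
      le_trans (norm_nonneg _) (hM2 (0,0) ⟨⟨le_rfl, hT.le⟩, ⟨le_rfl, hv⟩⟩)
    -- the per-n estimate from the key lemma
    have hkeyn : ∀ n, (∫ t in (e n)..(min v T - e n), F12 t (v - t))
        ≤ (∫ p in Icc (0:ℝ) T ×ˢ Ioi (0:ℝ), |G1 p.1 p.2|)
          + ((∫ t in (e n)..(min v T - e n), (F12 t (e n) - F11 t (e n)) / 2)
          + ∫ r in (e n)..(v - e n), (F11 (e n) r + F12 (e n) r) / 2) := by
      intro n
      have h := key hT h11 h12 hd11 hd12 heq hIntG v v (e n) (he_pos n)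
        (by linarith [he_le3 n, he_pos n])
        (by linarith [he_pos n])
        (by rw [max_eq_left hv]; linarith [he_pos n])
      rw [max_eq_left hv, show v - v + e n = e n from by ring,
        min_eq_right (by linarith [he_pos n] : min v T - e n ≤ v + e n),
        intervalIntegral.integral_same] at h
      linarith
    -- limit of the left-hand side
    have hfc : ContinuousOn (fun t => F12 t (v - t)) (Icc 0 (min v T)) := by
      apply hc12.comp (by fun_prop : Continuous (fun t : ℝ => (t, v - t))).continuousOn
      intro t ht
      rw [mem_Icc] at ht
      exact ⟨⟨ht.1, le_trans ht.2 hmT⟩, by simp only [mem_Ici]; linarith [ht.2, hmv]⟩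
    have hIlim : Tendsto (fun n => ∫ t in (e n)..(min v T - e n), F12 t (v - t)) atTop
        (𝓝 (∫ t in Ioc (0:ℝ) (min v T), F12 t (v - t))) := by
      apply tendsto_DC _ _ 0 (min v T) _ _
        (fun n => ⟨(he_pos n).le, by linarith [he_pos n]⟩)
        (fun n => by linarith [he_le3 n, he_pos n])
        (fun n => (hfc.mono Ioc_subset_Icc_self).aestronglyMeasurable measurableSet_Ioc)
        M2 hM2n
      · intro n t ht
        rw [mem_Ioc] at ht
        rw [← Real.norm_eq_abs]
        refine hM2 (t, v - t) ⟨⟨ht.1.le, le_trans ht.2 hmT⟩, ?_⟩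
        rw [mem_Icc]
        constructor <;> dsimp only <;> linarith [ht.1, ht.2, hmv]
      · filter_upwards [ae_restrict_mem measurableSet_Ioc,
          ae_ne_restrict (Ioc 0 (min v T)) (min v T)] with t htm htne
        have ht2 : t < min v T := lt_of_le_of_ne htm.2 htne
        have hev : ∀ᶠ n in atTop, t ∈ Ioc (e n) (min v T - e n) := by
          filter_upwards [he0.eventually_lt_const htm.1,
            he0.eventually_lt_const (by linarith : (0:ℝ) < min v T - t)] with n hn1 hn2
          exact ⟨hn1, by linarith⟩
        exact Tendsto.congr' (hev.mono fun n hn => (Set.indicator_of_mem hn _).symm)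
          tendsto_const_nhds
    -- limit of the boundary term at r = e n
    have hQlim : Tendsto (fun n => ∫ t in (e n)..(min v T - e n),
        (F12 t (e n) - F11 t (e n)) / 2) atTop (𝓝 0) := by
      have h0 : (0:ℝ) = ∫ t in Ioc (0:ℝ) (min v T), (0:ℝ) := by simp
      rw [h0]
      have hmeasQ : ∀ n : ℕ, AEStronglyMeasurable (fun t => (F12 t (e n) - F11 t (e n)) / 2)
          (volume.restrict (Ioc (0:ℝ) (min v T))) := by
        intro n
        have hcont : ContinuousOn (fun t => (F12 t (e n) - F11 t (e n)) / 2) (Icc 0 (min v T)) := by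
          apply ContinuousOn.div_const
          apply ContinuousOn.sub
          · apply hc12.comp (by fun_prop : Continuous (fun t : ℝ => (t, e n))).continuousOn
            intro t ht
            rw [mem_Icc] at ht
            exact ⟨⟨ht.1, le_trans ht.2 hmT⟩, mem_Ici.mpr (he_pos n).le⟩
          · apply hc11.comp (by fun_prop : Continuous (fun t : ℝ => (t, e n))).continuousOn
            intro t ht
            rw [mem_Icc] at ht
            exact ⟨⟨ht.1, le_trans ht.2 hmT⟩, mem_Ici.mpr (he_pos n).le⟩
        exact (hcont.mono Ioc_subset_Icc_self).aestronglyMeasurable measurableSet_Ioc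
      apply tendsto_DC _ _ 0 (min v T) _ _
        (fun n => ⟨(he_pos n).le, by linarith [he_pos n]⟩)
        (fun n => by linarith [he_le3 n, he_pos n])
        hmeasQ ((M1 + M2)/2) (by linarith)
      · intro n t ht
        rw [mem_Ioc] at ht
        have hmem : (t, e n) ∈ Icc (0:ℝ) T ×ˢ Icc (0:ℝ) v :=
          ⟨⟨ht.1.le, le_trans ht.2 hmT⟩, mem_Icc.mpr ⟨(he_pos n).le, by linarith [he_le3 n, he_pos n]⟩⟩
        have b1 := hM1 (t, e n) hmem
        have b2 := hM2 (t, e n) hmem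
        rw [Real.norm_eq_abs] at b1 b2
        rw [abs_div, abs_two]
        have := abs_sub (F12 t (e n)) (F11 t (e n))
        linarith
      · filter_upwards [ae_restrict_mem measurableSet_Ioc,
          ae_ne_restrict (Ioc 0 (min v T)) (min v T)] with t htm htne
        have ht2 : t < min v T := lt_of_le_of_ne htm.2 htne
        have hev : ∀ᶠ n in atTop, t ∈ Ioc (e n) (min v T - e n) := by
          filter_upwards [he0.eventually_lt_const htm.1,
            he0.eventually_lt_const (by linarith : (0:ℝ) < min v T - t)] with n hn1 hn2
          exact ⟨hn1, by linarith⟩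
        have hF : Tendsto (fun n => (F12 t (e n) - F11 t (e n)) / 2) atTop
            (𝓝 ((F12 t 0 - F11 t 0) / 2)) :=
          tendsto_cont_seq (F := fun p : ℝ × ℝ => (F12 p.1 p.2 - F11 p.1 p.2) / 2)
            ((hc12.sub hc11).div_const 2)
            (p := (t, 0)) ⟨⟨htm.1.le, by linarith⟩, self_mem_Ici⟩
            (q := fun n => (t, e n)) (tendsto_const_nhds.prodMk_nhds he0)
            (fun n => ⟨⟨htm.1.le, by linarith⟩, mem_Ici.mpr (he_pos n).le⟩)
        have hz : (F12 t 0 - F11 t 0) / 2 = 0 := by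
          rw [← hbc t ⟨htm.1.le, by linarith⟩]; ring
        rw [hz] at hF
        exact Tendsto.congr' (hev.mono fun n hn => (Set.indicator_of_mem hn _).symm) hF
    -- limit of the data term
    have hWlim : Tendsto (fun n => ∫ r in (e n)..(v - e n),
        (F11 (e n) r + F12 (e n) r) / 2) atTop
        (𝓝 (∫ r in Ioc (0:ℝ) v, (F11 0 r + F12 0 r) / 2)) := by
      have hmeasW : ∀ n : ℕ, AEStronglyMeasurable (fun r => (F11 (e n) r + F12 (e n) r) / 2)
          (volume.restrict (Ioc (0:ℝ) v)) := by
        intro n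
        have hcont : ContinuousOn (fun r => (F11 (e n) r + F12 (e n) r) / 2) (Icc 0 v) := by
          apply ContinuousOn.div_const
          apply ContinuousOn.add
          · apply hc11.comp (by fun_prop : Continuous (fun r : ℝ => (e n, r))).continuousOn
            intro r hr
            rw [mem_Icc] at hr
            exact ⟨⟨(he_pos n).le, by linarith [he_le3 n, he_pos n]⟩, mem_Ici.mpr hr.1⟩
          · apply hc12.comp (by fun_prop : Continuous (fun r : ℝ => (e n, r))).continuousOn
            intro r hr
            rw [mem_Icc] at hr
            exact ⟨⟨(he_pos n).le, by linarith [he_le3 n, he_pos n]⟩, mem_Ici.mpr hr.1⟩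
        exact (hcont.mono Ioc_subset_Icc_self).aestronglyMeasurable measurableSet_Ioc
      apply tendsto_DC _ _ 0 v _ _
        (fun n => ⟨(he_pos n).le, by linarith [he_pos n]⟩)
        (fun n => by linarith [he_le3 n, he_pos n])
        hmeasW ((M1 + M2)/2) (by linarith)
      · intro n r hr
        rw [mem_Ioc] at hr
        have hmem : (e n, r) ∈ Icc (0:ℝ) T ×ˢ Icc (0:ℝ) v :=
          ⟨⟨(he_pos n).le, by linarith [he_le3 n, he_pos n]⟩, mem_Icc.mpr ⟨hr.1.le, hr.2⟩⟩
        have b1 := hM1 (e n, r) hmem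
        have b2 := hM2 (e n, r) hmem
        rw [Real.norm_eq_abs] at b1 b2
        rw [abs_div, abs_two]
        have := abs_add_le (F11 (e n) r) (F12 (e n) r)
        linarith
      · filter_upwards [ae_restrict_mem measurableSet_Ioc,
          ae_ne_restrict (Ioc 0 v) v] with r hrm hrne
        have hr2 : r < v := lt_of_le_of_ne hrm.2 hrne
        have hev : ∀ᶠ n in atTop, r ∈ Ioc (e n) (v - e n) := by
          filter_upwards [he0.eventually_lt_const hrm.1,
            he0.eventually_lt_const (by linarith : (0:ℝ) < v - r)] with n hn1 hn2
          exact ⟨hn1, by linarith⟩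
        have hF : Tendsto (fun n => (F11 (e n) r + F12 (e n) r) / 2) atTop
            (𝓝 ((F11 0 r + F12 0 r) / 2)) :=
          tendsto_cont_seq (F := fun p : ℝ × ℝ => (F11 p.1 p.2 + F12 p.1 p.2) / 2)
            ((hc11.add hc12).div_const 2)
            (p := (0, r)) ⟨⟨le_rfl, hT.le⟩, mem_Ici.mpr hrm.1.le⟩
            (q := fun n => (e n, r)) (he0.prodMk_nhds tendsto_const_nhds)
            (fun n => ⟨⟨(he_pos n).le, by linarith [he_le3 n, he_pos n]⟩, mem_Ici.mpr hrm.1.le⟩)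
        exact Tendsto.congr' (hev.mono fun n hn => (Set.indicator_of_mem hn _).symm) hF
    -- pass to the limit
    have hRHS : Tendsto (fun n => (∫ p in Icc (0:ℝ) T ×ˢ Ioi (0:ℝ), |G1 p.1 p.2|)
        + ((∫ t in (e n)..(min v T - e n), (F12 t (e n) - F11 t (e n)) / 2)
        + ∫ r in (e n)..(v - e n), (F11 (e n) r + F12 (e n) r) / 2)) atTop
        (𝓝 ((∫ p in Icc (0:ℝ) T ×ˢ Ioi (0:ℝ), |G1 p.1 p.2|)
          + (0 + ∫ r in Ioc (0:ℝ) v, (F11 0 r + F12 0 r) / 2))) :=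
      tendsto_const_nhds.add (hQlim.add hWlim)
    have hfinal := le_of_tendsto_of_tendsto' hIlim hRHS hkeyn
    have hIntOn : IntegrableOn (fun r => F11 0 r + F12 0 r) (Ioc (0:ℝ) v) :=
      hInt.mono_set Ioc_subset_Ioi_self
    have hL1 : (∫ r in Ioc (0:ℝ) v, (F11 0 r + F12 0 r) / 2)
        ≤ ∫ r in Ioc (0:ℝ) v, (F11 0 r + F12 0 r) := by
      apply setIntegral_mono_on (hIntOn.div_const 2) hIntOn measurableSet_Ioc
      intro r hr
      have := h11 0 r ⟨le_rfl, hT.le⟩ (le_of_lt hr.1)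
      have := h12 0 r ⟨le_rfl, hT.le⟩ (le_of_lt hr.1)
      linarith
    have hL2 : (∫ r in Ioc (0:ℝ) v, (F11 0 r + F12 0 r))
        ≤ ∫ r in Ioi (0:ℝ), (F11 0 r + F12 0 r) := by
      apply setIntegral_mono_set hInt
      · rw [EventuallyLE]
        rw [ae_restrict_iff' measurableSet_Ioi]
        apply Eventually.of_forall
        intro r hr
        exact add_nonneg (h11 0 r ⟨le_rfl, hT.le⟩ (mem_Ici.mpr (le_of_lt hr))) (h12 0 r ⟨le_rfl, hT.le⟩ (mem_Ici.mpr (le_of_lt hr)))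
      · exact HasSubset.Subset.eventuallyLE Ioc_subset_Ioi_self
    rw [intervalIntegral.integral_of_le hm.le]
    linarith

lemma wrapper_u {T : ℝ} {F11 F12 G1 : ℝ → ℝ → ℝ} (hT : 0 < T)
    (h11 : ∀ t r, t ∈ Icc 0 T → r ∈ Ici (0 : ℝ) → 0 ≤ F11 t r)
    (h12 : ∀ t r, t ∈ Icc 0 T → r ∈ Ici (0 : ℝ) → 0 ≤ F12 t r)
    (hc11 : ContinuousOn (fun p : ℝ × ℝ => F11 p.1 p.2) (Icc 0 T ×ˢ Ici 0))
    (hc12 : ContinuousOn (fun p : ℝ × ℝ => F12 p.1 p.2) (Icc 0 T ×ˢ Ici 0))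
    (hd11 : ContDiffOn ℝ 1 (fun p : ℝ × ℝ => F11 p.1 p.2) (Ioo 0 T ×ˢ Ioi 0))
    (hd12 : ContDiffOn ℝ 1 (fun p : ℝ × ℝ => F12 p.1 p.2) (Ioo 0 T ×ˢ Ioi 0))
    (heq : ∀ t r, t ∈ Ioo 0 T → r ∈ Ioi (0 : ℝ) →
      pderivU F11 t r + pderivV F12 t r = G1 t r)
    (hbc : ∀ t ∈ Icc (0 : ℝ) T, F11 t 0 = F12 t 0)
    (hInt : IntegrableOn (fun r => F11 0 r + F12 0 r) (Ioi 0))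
    (hIntG : IntegrableOn (fun p : ℝ × ℝ => G1 p.1 p.2) (Icc 0 T ×ˢ Ioi 0))
    (u : ℝ) (hu : u ≤ T) :
    (∫ t in (max u 0)..T, F11 t (t - u)) ≤
      1 * ((∫ r in Ioi (0 : ℝ), (F11 0 r + F12 0 r)) +
        ∫ p in Icc (0 : ℝ) T ×ˢ Ioi (0 : ℝ), |G1 p.1 p.2|) := by
  have hI0 : 0 ≤ ∫ r in Ioi (0 : ℝ), (F11 0 r + F12 0 r) :=
    setIntegral_nonneg measurableSet_Ioi (fun r hr =>
      add_nonneg (h11 0 r ⟨le_rfl, hT.le⟩ (mem_Ici.mpr (le_of_lt (mem_Ioi.mp hr)))) (h12 0 r ⟨le_rfl, hT.le⟩ (mem_Ici.mpr (le_of_lt (mem_Ioi.mp hr)))))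
  have hIG : 0 ≤ ∫ p in Icc (0 : ℝ) T ×ˢ Ioi (0 : ℝ), |G1 p.1 p.2| :=
    setIntegral_nonneg (measurableSet_Icc.prod measurableSet_Ioi) (fun p _ => abs_nonneg _)
  have hMu0 : (0:ℝ) ≤ max u 0 := le_max_right u 0
  have huMu : u ≤ max u 0 := le_max_left u 0
  have hMuT : max u 0 ≤ T := max_le hu hT.le
  rcases eq_or_lt_of_le hMuT with heqT | hlt
  · rw [heqT, intervalIntegral.integral_same]
    linarith
  · set e : ℕ → ℝ := fun n => (T - max u 0) / ((n : ℝ) + 3) with he_def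
    have he_pos : ∀ n, 0 < e n := fun n => by
      have : (0:ℝ) < (n : ℝ) + 3 := by positivity
      exact div_pos (by linarith) this
    have he_le3 : ∀ n, 3 * e n ≤ T - max u 0 := by
      intro n
      have h3 : (3 : ℝ) ≤ (n : ℝ) + 3 := le_add_of_nonneg_left (Nat.cast_nonneg n)
      have := div_le_div_of_nonneg_left (by linarith : (0:ℝ) ≤ T - max u 0)
        (by norm_num : (0:ℝ) < 3) h3
      calc 3 * e n ≤ 3 * ((T - max u 0) / 3) := by
            apply mul_le_mul_of_nonneg_left _ (by norm_num)
            simpa [he_def] using this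
        _ = T - max u 0 := by ring
    have he0 : Tendsto e atTop (𝓝 0) := eseq_tendsto (T - max u 0)
    have hminv1 : min (2*T - u + 1) T = T := min_eq_right (by linarith)
    -- compact bounds
    have hKsub : Icc (0:ℝ) T ×ˢ Icc (0:ℝ) (2*T - u + 1) ⊆ Icc (0:ℝ) T ×ˢ Ici (0:ℝ) :=
      prod_mono_right Icc_subset_Ici_self
    have hKcomp : IsCompact (Icc (0:ℝ) T ×ˢ Icc (0:ℝ) (2*T - u + 1)) :=
      isCompact_Icc.prod isCompact_Icc
    obtain ⟨M1, hM1⟩ := hKcomp.exists_bound_of_continuousOn (hc11.mono hKsub)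
    obtain ⟨M2, hM2⟩ := hKcomp.exists_bound_of_continuousOn (hc12.mono hKsub)
    have hM1n : 0 ≤ M1 :=
      le_trans (norm_nonneg _) (hM1 (0,0) ⟨⟨le_rfl, hT.le⟩, ⟨le_rfl, by dsimp only; linarith⟩⟩)
    have hM2n : 0 ≤ M2 :=
      le_trans (norm_nonneg _) (hM2 (0,0) ⟨⟨le_rfl, hT.le⟩, ⟨le_rfl, by dsimp only; linarith⟩⟩)
    -- the per-n estimate
    have hkeyn : ∀ n, (∫ t in (max u 0 + e n)..(T - e n), F11 t (t - u))
        ≤ (∫ p in Icc (0:ℝ) T ×ˢ Ioi (0:ℝ), |G1 p.1 p.2|)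
          + ((∫ t in (e n)..(max u 0 + e n), (F12 t (max u 0 - u + e n) - F11 t (max u 0 - u + e n)) / 2)
          + ∫ r in (max u 0 - u + e n)..(2*T - u + 1 - e n), (F11 (e n) r + F12 (e n) r) / 2) := by
      intro n
      have h := key hT h11 h12 hd11 hd12 heq hIntG u (2*T - u + 1) (e n) (he_pos n)
        (by rw [hminv1]; linarith [he_le3 n, he_pos n])
        (by rw [hminv1]; linarith [he_pos n])
        (by rw [hminv1]; linarith [he_pos n])
      rw [hminv1, min_eq_left (by linarith [he_le3 n, he_pos n] : max u 0 + e n ≤ T - e n)] at h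
      have hF12nn : 0 ≤ ∫ t in (e n)..(T - e n), F12 t (2*T - u + 1 - t) := by
        apply intervalIntegral.integral_nonneg (by linarith [he_le3 n, he_pos n])
        intro t ht
        rw [mem_Icc] at ht
        exact h12 t _ ⟨by linarith [he_pos n], by linarith [he_pos n]⟩
          (mem_Ici.mpr (by linarith [he_pos n]))
      linarith
    -- limit of the left-hand side
    have hfc : ContinuousOn (fun t => F11 t (t - u)) (Icc (max u 0) T) := by
      apply hc11.comp (by fun_prop : Continuous (fun t : ℝ => (t, t - u))).continuousOn
      intro t ht
      rw [mem_Icc] at ht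
      refine ⟨⟨?_, ?_⟩, mem_Ici.mpr ?_⟩ <;> dsimp only <;> linarith [ht.1, ht.2]
    have hIlim : Tendsto (fun n => ∫ t in (max u 0 + e n)..(T - e n), F11 t (t - u)) atTop
        (𝓝 (∫ t in Ioc (max u 0) T, F11 t (t - u))) := by
      apply tendsto_DC _ _ (max u 0) T _ _
        (fun n => ⟨by linarith [he_pos n], by linarith [he_pos n]⟩)
        (fun n => by linarith [he_le3 n, he_pos n])
        (fun n => ((hfc.mono Ioc_subset_Icc_self).aestronglyMeasurable measurableSet_Ioc))
        M1 hM1n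
      · intro n t ht
        rw [mem_Ioc] at ht
        rw [← Real.norm_eq_abs]
        refine hM1 (t, t - u) ⟨⟨by dsimp only; linarith [ht.1], by dsimp only; linarith [ht.2]⟩, ?_⟩
        rw [mem_Icc]
        constructor <;> dsimp only <;> linarith [ht.1, ht.2]
      · filter_upwards [ae_restrict_mem measurableSet_Ioc,
          ae_ne_restrict (Ioc (max u 0) T) T] with t htm htne
        have ht2 : t < T := lt_of_le_of_ne htm.2 htne
        have hev : ∀ᶠ n in atTop, t ∈ Ioc (max u 0 + e n) (T - e n) := by
          filter_upwards [he0.eventually_lt_const (by linarith [htm.1] : (0:ℝ) < t - max u 0),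
            he0.eventually_lt_const (by linarith : (0:ℝ) < T - t)] with n hn1 hn2
          exact ⟨by linarith, by linarith⟩
        exact Tendsto.congr' (hev.mono fun n hn => (Set.indicator_of_mem hn _).symm)
          tendsto_const_nhds
    -- limit of the boundary term
    have hQlim : Tendsto (fun n => ∫ t in (e n)..(max u 0 + e n),
        (F12 t (max u 0 - u + e n) - F11 t (max u 0 - u + e n)) / 2) atTop (𝓝 0) := by
      rcases le_or_gt u 0 with hu0 | hu0
      · have hMueq : max u 0 = 0 := max_eq_right hu0
        apply Tendsto.congr (f₁ := fun _ : ℕ => (0:ℝ)) _ tendsto_const_nhds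
        intro n
        rw [hMueq, zero_add, intervalIntegral.integral_same]
      · have hMueq : max u 0 = u := max_eq_left hu0.le
        simp only [hMueq, sub_self, zero_add]
        have h0 : (0:ℝ) = ∫ t in Ioc (0:ℝ) T, (0:ℝ) := by simp
        rw [h0]
        have hmeasQ : ∀ n : ℕ, AEStronglyMeasurable (fun t => (F12 t (e n) - F11 t (e n)) / 2)
            (volume.restrict (Ioc (0:ℝ) T)) := by
          intro n
          have hcont : ContinuousOn (fun t => (F12 t (e n) - F11 t (e n)) / 2) (Icc 0 T) := by
            apply ContinuousOn.div_const
            apply ContinuousOn.sub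
            · apply hc12.comp (by fun_prop : Continuous (fun t : ℝ => (t, e n))).continuousOn
              intro t ht
              rw [mem_Icc] at ht
              exact ⟨⟨ht.1, ht.2⟩, mem_Ici.mpr (he_pos n).le⟩
            · apply hc11.comp (by fun_prop : Continuous (fun t : ℝ => (t, e n))).continuousOn
              intro t ht
              rw [mem_Icc] at ht
              exact ⟨⟨ht.1, ht.2⟩, mem_Ici.mpr (he_pos n).le⟩
          exact (hcont.mono Ioc_subset_Icc_self).aestronglyMeasurable measurableSet_Ioc
        apply tendsto_DC _ _ 0 T _ _
          (fun n => ⟨(he_pos n).le, by linarith [he_le3 n, he_pos n, hMueq.le, hMueq.ge]⟩)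
          (fun n => by linarith [hu0])
          hmeasQ ((M1 + M2)/2) (by linarith)
        · intro n t ht
          rw [mem_Ioc] at ht
          have hmem : (t, e n) ∈ Icc (0:ℝ) T ×ˢ Icc (0:ℝ) (2*T - u + 1) :=
            ⟨⟨ht.1.le, ht.2⟩, mem_Icc.mpr ⟨(he_pos n).le,
              by linarith [he_le3 n, he_pos n, hMu0]⟩⟩
          have b1 := hM1 (t, e n) hmem
          have b2 := hM2 (t, e n) hmem
          rw [Real.norm_eq_abs] at b1 b2
          rw [abs_div, abs_two]
          have := abs_sub (F12 t (e n)) (F11 t (e n))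
          linarith
        · filter_upwards [ae_restrict_mem measurableSet_Ioc] with t htm
          rcases le_or_gt t u with htu | htu
          · have hev : ∀ᶠ n in atTop, t ∈ Ioc (e n) (u + e n) := by
              filter_upwards [he0.eventually_lt_const htm.1] with n hn
              exact ⟨hn, by linarith [he_pos n]⟩
            have hF : Tendsto (fun n => (F12 t (e n) - F11 t (e n)) / 2) atTop
                (𝓝 ((F12 t 0 - F11 t 0) / 2)) :=
              tendsto_cont_seq (F := fun p : ℝ × ℝ => (F12 p.1 p.2 - F11 p.1 p.2) / 2)
                ((hc12.sub hc11).div_const 2)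
                (p := (t, 0)) ⟨⟨htm.1.le, htm.2⟩, self_mem_Ici⟩
                (q := fun n => (t, e n)) (tendsto_const_nhds.prodMk_nhds he0)
                (fun n => ⟨⟨htm.1.le, htm.2⟩, mem_Ici.mpr (he_pos n).le⟩)
            have hz : (F12 t 0 - F11 t 0) / 2 = 0 := by
              rw [← hbc t ⟨htm.1.le, htm.2⟩]; ring
            rw [hz] at hF
            exact Tendsto.congr' (hev.mono fun n hn => (Set.indicator_of_mem hn _).symm) hF
          · have hev : ∀ᶠ n in atTop, (Ioc (e n) (u + e n)).indicator
                (fun t => (F12 t (e n) - F11 t (e n)) / 2) t = 0 := by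
              filter_upwards [he0.eventually_lt_const (by linarith : (0:ℝ) < t - u)] with n hn
              apply Set.indicator_of_notMem
              rw [mem_Ioc]
              push_neg
              intro _
              linarith
            exact Tendsto.congr' (hev.mono fun n hn => hn.symm) tendsto_const_nhds
    -- limit of the data term
    have hρlim : Tendsto (fun n => max u 0 - u + e n) atTop (𝓝 (max u 0 - u)) := by
      simpa using tendsto_const_nhds.add he0
    have hWlim : Tendsto (fun n => ∫ r in (max u 0 - u + e n)..(2*T - u + 1 - e n),
        (F11 (e n) r + F12 (e n) r) / 2) atTop
        (𝓝 (∫ r in Ioc (0:ℝ) (2*T - u + 1),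
          (Ioi (max u 0 - u)).indicator (fun r => (F11 0 r + F12 0 r) / 2) r)) := by
      have hmeasW : ∀ n : ℕ, AEStronglyMeasurable (fun r => (F11 (e n) r + F12 (e n) r) / 2)
          (volume.restrict (Ioc (0:ℝ) (2*T - u + 1))) := by
        intro n
        have hcont : ContinuousOn (fun r => (F11 (e n) r + F12 (e n) r) / 2)
            (Icc 0 (2*T - u + 1)) := by
          apply ContinuousOn.div_const
          apply ContinuousOn.add
          · apply hc11.comp (by fun_prop : Continuous (fun r : ℝ => (e n, r))).continuousOn
            intro r hr
            rw [mem_Icc] at hr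
            exact ⟨⟨(he_pos n).le, by linarith [he_le3 n, he_pos n, hMu0]⟩, mem_Ici.mpr hr.1⟩
          · apply hc12.comp (by fun_prop : Continuous (fun r : ℝ => (e n, r))).continuousOn
            intro r hr
            rw [mem_Icc] at hr
            exact ⟨⟨(he_pos n).le, by linarith [he_le3 n, he_pos n, hMu0]⟩, mem_Ici.mpr hr.1⟩
        exact (hcont.mono Ioc_subset_Icc_self).aestronglyMeasurable measurableSet_Ioc
      apply tendsto_DC _ _ 0 (2*T - u + 1) _ _
        (fun n => ⟨by linarith [he_pos n], by linarith [he_pos n]⟩)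
        (fun n => by linarith [he_le3 n, he_pos n, hMuT])
        hmeasW ((M1 + M2)/2) (by linarith)
      · intro n r hr
        rw [mem_Ioc] at hr
        have hmem : (e n, r) ∈ Icc (0:ℝ) T ×ˢ Icc (0:ℝ) (2*T - u + 1) :=
          ⟨⟨(he_pos n).le, by linarith [he_le3 n, he_pos n, hMu0]⟩,
            mem_Icc.mpr ⟨hr.1.le, hr.2⟩⟩
        have b1 := hM1 (e n, r) hmem
        have b2 := hM2 (e n, r) hmem
        rw [Real.norm_eq_abs] at b1 b2
        rw [abs_div, abs_two]
        have := abs_add_le (F11 (e n) r) (F12 (e n) r)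
        linarith
      · filter_upwards [ae_restrict_mem measurableSet_Ioc,
          ae_ne_restrict (Ioc 0 (2*T - u + 1)) (2*T - u + 1),
          ae_ne_restrict (Ioc 0 (2*T - u + 1)) (max u 0 - u)] with r hrm hrne hrneδ
        have hr2 : r < 2*T - u + 1 := lt_of_le_of_ne hrm.2 hrne
        rcases lt_or_gt_of_ne hrneδ with hrδ | hrδ
        · -- r < max u 0 - u : eventually outside
          have hev : ∀ᶠ n in atTop, (Ioc (max u 0 - u + e n) (2*T - u + 1 - e n)).indicator
              (fun r => (F11 (e n) r + F12 (e n) r) / 2) r = 0 := by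
            filter_upwards [hρlim.eventually_const_lt hrδ] with n hn
            apply Set.indicator_of_notMem
            rw [mem_Ioc]
            push_neg
            intro hcon
            linarith
          rw [Set.indicator_of_notMem (by rw [mem_Ioi]; linarith : r ∉ Ioi (max u 0 - u))]
          exact Tendsto.congr' (hev.mono fun n hn => hn.symm) tendsto_const_nhds
        · -- r > max u 0 - u : eventually inside
          have hev : ∀ᶠ n in atTop, r ∈ Ioc (max u 0 - u + e n) (2*T - u + 1 - e n) := by
            filter_upwards [hρlim.eventually_lt_const hrδ,
              he0.eventually_lt_const (by linarith : (0:ℝ) < 2*T - u + 1 - r)] with n hn1 hn2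
            exact ⟨hn1, by linarith⟩
          have hF : Tendsto (fun n => (F11 (e n) r + F12 (e n) r) / 2) atTop
              (𝓝 ((F11 0 r + F12 0 r) / 2)) :=
            tendsto_cont_seq (F := fun p : ℝ × ℝ => (F11 p.1 p.2 + F12 p.1 p.2) / 2)
              ((hc11.add hc12).div_const 2)
              (p := (0, r)) ⟨⟨le_rfl, hT.le⟩, mem_Ici.mpr hrm.1.le⟩
              (q := fun n => (e n, r)) (he0.prodMk_nhds tendsto_const_nhds)
              (fun n => ⟨⟨(he_pos n).le, by linarith [he_le3 n, he_pos n, hMu0]⟩,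
                mem_Ici.mpr hrm.1.le⟩)
          rw [show (Ioi (max u 0 - u)).indicator (fun r => (F11 0 r + F12 0 r) / 2) r
            = (F11 0 r + F12 0 r) / 2 from Set.indicator_of_mem (mem_Ioi.mpr hrδ) _]
          exact Tendsto.congr' (hev.mono fun n hn => (Set.indicator_of_mem hn _).symm) hF
    -- pass to the limit
    have hRHS : Tendsto (fun n => (∫ p in Icc (0:ℝ) T ×ˢ Ioi (0:ℝ), |G1 p.1 p.2|)
        + ((∫ t in (e n)..(max u 0 + e n),
            (F12 t (max u 0 - u + e n) - F11 t (max u 0 - u + e n)) / 2)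
        + ∫ r in (max u 0 - u + e n)..(2*T - u + 1 - e n), (F11 (e n) r + F12 (e n) r) / 2))
        atTop
        (𝓝 ((∫ p in Icc (0:ℝ) T ×ˢ Ioi (0:ℝ), |G1 p.1 p.2|)
          + (0 + ∫ r in Ioc (0:ℝ) (2*T - u + 1),
            (Ioi (max u 0 - u)).indicator (fun r => (F11 0 r + F12 0 r) / 2) r))) :=
      tendsto_const_nhds.add (hQlim.add hWlim)
    have hfinal := le_of_tendsto_of_tendsto' hIlim hRHS hkeyn
    -- identify the limit data integral
    have hHoo : (∫ r in Ioc (0:ℝ) (2*T - u + 1),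
        (Ioi (max u 0 - u)).indicator (fun r => (F11 0 r + F12 0 r) / 2) r)
        = ∫ r in Ioc (max u 0 - u) (2*T - u + 1), (F11 0 r + F12 0 r) / 2 := by
      rw [setIntegral_indicator measurableSet_Ioi]
      have hset : Ioc (0:ℝ) (2*T - u + 1) ∩ Ioi (max u 0 - u)
          = Ioc (max u 0 - u) (2*T - u + 1) := by
        ext r
        simp only [mem_inter_iff, mem_Ioc, mem_Ioi]
        constructor
        · rintro ⟨⟨h1, h2⟩, h3⟩
          exact ⟨h3, h2⟩
        · rintro ⟨h1, h2⟩
          exact ⟨⟨by linarith, h2⟩, h1⟩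
      rw [hset]
    have hIntOn : IntegrableOn (fun r => F11 0 r + F12 0 r) (Ioc (max u 0 - u) (2*T - u + 1)) := by
      apply hInt.mono_set
      intro r hr
      rw [mem_Ioc] at hr
      exact mem_Ioi.mpr (by linarith [hr.1])
    have hL1 : (∫ r in Ioc (max u 0 - u) (2*T - u + 1), (F11 0 r + F12 0 r) / 2)
        ≤ ∫ r in Ioc (max u 0 - u) (2*T - u + 1), (F11 0 r + F12 0 r) := by
      apply setIntegral_mono_on (hIntOn.div_const 2) hIntOn measurableSet_Ioc
      intro r hr
      rw [mem_Ioc] at hr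
      have := h11 0 r ⟨le_rfl, hT.le⟩ (mem_Ici.mpr (by linarith [hr.1]))
      have := h12 0 r ⟨le_rfl, hT.le⟩ (mem_Ici.mpr (by linarith [hr.1]))
      linarith
    have hL2 : (∫ r in Ioc (max u 0 - u) (2*T - u + 1), (F11 0 r + F12 0 r))
        ≤ ∫ r in Ioi (0:ℝ), (F11 0 r + F12 0 r) := by
      apply setIntegral_mono_set hInt
      · rw [EventuallyLE, ae_restrict_iff' measurableSet_Ioi]
        apply Eventually.of_forall
        intro r hr
        exact add_nonneg (h11 0 r ⟨le_rfl, hT.le⟩ (mem_Ici.mpr (le_of_lt hr)))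
          (h12 0 r ⟨le_rfl, hT.le⟩ (mem_Ici.mpr (le_of_lt hr)))
      · apply HasSubset.Subset.eventuallyLE
        intro r hr
        rw [mem_Ioc] at hr
        exact mem_Ioi.mpr (by linarith [hr.1])
    rw [hHoo] at hfinal
    rw [intervalIntegral.integral_of_le hMuT]
    linarith

/-- Lemma 3.1, first pair of estimates: integrals of the nonnegative null-transported
densities `F11`, `F12` along outgoing/incoming null rays are controlled by the data at
`t = 0` and the spacetime integral of the source `G1`. -/
theorem stmt_0 :
    ∃ C : ℝ, 0 < C ∧
      ∀ (T : ℝ) (F11 F12 G1 : ℝ → ℝ → ℝ),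
        0 < T →
        (∀ t r, t ∈ Icc 0 T → r ∈ Ici (0 : ℝ) → 0 ≤ F11 t r) →
        (∀ t r, t ∈ Icc 0 T → r ∈ Ici (0 : ℝ) → 0 ≤ F12 t r) →
        ContinuousOn (fun p : ℝ × ℝ => F11 p.1 p.2) (Icc 0 T ×ˢ Ici 0) →
        ContinuousOn (fun p : ℝ × ℝ => F12 p.1 p.2) (Icc 0 T ×ˢ Ici 0) →
        ContinuousOn (fun p : ℝ × ℝ => G1 p.1 p.2) (Icc 0 T ×ˢ Ici 0) →
        ContDiffOn ℝ 1 (fun p : ℝ × ℝ => F11 p.1 p.2) (Ioo 0 T ×ˢ Ioi 0) →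
        ContDiffOn ℝ 1 (fun p : ℝ × ℝ => F12 p.1 p.2) (Ioo 0 T ×ˢ Ioi 0) →
        (∀ t r, t ∈ Ioo 0 T → r ∈ Ioi (0 : ℝ) →
          pderivU F11 t r + pderivV F12 t r = G1 t r) →
        (∀ t ∈ Icc (0 : ℝ) T, F11 t 0 = F12 t 0) →
        IntegrableOn (fun r => F11 0 r + F12 0 r) (Ioi 0) →
        IntegrableOn (fun p : ℝ × ℝ => G1 p.1 p.2) (Icc 0 T ×ˢ Ioi 0) →
        ((∀ u ≤ T, (∫ t in (max u 0)..T, F11 t (t - u)) ≤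
            C * ((∫ r in Ioi (0 : ℝ), (F11 0 r + F12 0 r)) +
              ∫ p in Icc (0 : ℝ) T ×ˢ Ioi (0 : ℝ), |G1 p.1 p.2|)) ∧
         (∀ v, 0 ≤ v → (∫ t in (0 : ℝ)..min v T, F12 t (v - t)) ≤
            C * ((∫ r in Ioi (0 : ℝ), (F11 0 r + F12 0 r)) +
              ∫ p in Icc (0 : ℝ) T ×ˢ Ioi (0 : ℝ), |G1 p.1 p.2|))) := by
  refine ⟨1, one_pos, ?_⟩
  intro T F11 F12 G1 hT h11 h12 hc11 hc12 hcG hd11 hd12 heq hbc hInt hIntG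
  constructor
  · intro u hu
    exact wrapper_u hT h11 h12 hc11 hc12 hd11 hd12 heq hbc hInt hIntG u hu
  · intro v hv
    exact wrapper_v hT h11 h12 hc11 hc12 hd11 hd12 heq hbc hInt hIntG v hv
end

section
/- Let n ≥ 1, α ∈ ℝ, and let Φ : I × (0,∞) → ℝⁿ be twice continuously differentiable (I an open interval) satisfying the orthogonality relation Φ_t(t,r) · (Φ_tt(t,r) − Φ_rr(t,r) − Φ_r(t,r)/r) = 0 at every point. Define Φ_u := (1/2)(Φ_t − Φ_r) and Φ_v := (1/2)(Φ_t + Φ_r), and for a scalar function h of (t,r) set ∂_u h := (1/2)(∂_t h − ∂_r h), ∂_v h := (1/2)(∂_t h + ∂_r h). Then at every (t,r) with r > 0: ∂_u [ r^{1−α} |Φ_v|² ] + ∂_v [ r^{1−α} |Φ_u|² ] = (α/2) r^{−α} ( |Φ_v|² − |Φ_u|² ). -/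
open MeasureTheory Set RealInnerProductSpace

private lemma hasDerivAt_norm_sq_aux {n : ℕ} {g : ℝ → EuclideanSpace ℝ (Fin n)}
    {g' : EuclideanSpace ℝ (Fin n)} {x : ℝ} (hg : HasDerivAt g g' x) :
    HasDerivAt (fun s => ‖g s‖ ^ 2) (2 * ⟪g x, g'⟫) x := by
  have h := hg.inner ℝ hg
  have he : (fun s => ‖g s‖ ^ 2) = fun s => ⟪g s, g s⟫ :=
    funext fun s => (real_inner_self_eq_norm_sq _).symm
  rw [he]
  refine h.congr_deriv ?_
  rw [real_inner_comm g' (g x)]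
  ring

/-- Weighted null energy identity for radially symmetric wave maps:
if `Φ_t ⟂ (Φ_tt − Φ_rr − Φ_r/r)`, then
`∂_u[r^{1−α}|Φ_v|²] + ∂_v[r^{1−α}|Φ_u|²] = (α/2) r^{−α}(|Φ_v|² − |Φ_u|²)`. -/
theorem stmt_6 (n : ℕ) (hn : 1 ≤ n) (α : ℝ) (a b : ℝ)
    (Φ : ℝ → ℝ → EuclideanSpace ℝ (Fin n))
    (hΦ : ContDiffOn ℝ 2 (fun p : ℝ × ℝ => Φ p.1 p.2) (Ioo a b ×ˢ Ioi 0))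
    (horth : ∀ t ∈ Ioo a b, ∀ r : ℝ, 0 < r →
      ⟪pderivT Φ t r,
        pderivT (pderivT Φ) t r - pderivR (pderivR Φ) t r - r⁻¹ • pderivR Φ t r⟫ = 0) :
    ∀ t ∈ Ioo a b, ∀ r : ℝ, 0 < r →
      pderivU (fun t' r' => r' ^ (1 - α) * ‖pderivV Φ t' r'‖ ^ 2) t r
        + pderivV (fun t' r' => r' ^ (1 - α) * ‖pderivU Φ t' r'‖ ^ 2) t r
      = (α / 2) * r ^ (-α) * (‖pderivV Φ t r‖ ^ 2 - ‖pderivU Φ t r‖ ^ 2) := by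
  intro t ht r hr
  set F : ℝ × ℝ → EuclideanSpace ℝ (Fin n) := (fun p : ℝ × ℝ => Φ p.1 p.2) with hF
  have hso : IsOpen (Ioo a b ×ˢ Ioi (0:ℝ)) := isOpen_Ioo.prod isOpen_Ioi
  have hmem : ((t, r) : ℝ × ℝ) ∈ Ioo a b ×ˢ Ioi (0:ℝ) := ⟨ht, hr⟩
  have hnhds : Ioo a b ×ˢ Ioi (0:ℝ) ∈ nhds ((t, r) : ℝ × ℝ) := hso.mem_nhds hmem
  have hdiff : ∀ q ∈ Ioo a b ×ˢ Ioi (0:ℝ), HasFDerivAt F (fderiv ℝ F q) q := fun q hq =>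
    ((hΦ.differentiableOn two_ne_zero).differentiableAt (hso.mem_nhds hq)).hasFDerivAt
  have hev : ∀ᶠ q in nhds ((t,r) : ℝ × ℝ), HasFDerivAt F (fderiv ℝ F q) q := by
    filter_upwards [hnhds] with q hq using hdiff q hq
  have h2 : ContDiffAt ℝ 2 F (t, r) := hΦ.contDiffAt hnhds
  have hf'' : HasFDerivAt (fderiv ℝ F) (fderiv ℝ (fderiv ℝ F) (t, r)) (t, r) :=
    ((h2.fderiv_right (m := 1) (le_refl 2)).differentiableAt one_ne_zero).hasFDerivAt
  have hsymm : ∀ v w : ℝ × ℝ, fderiv ℝ (fderiv ℝ F) (t, r) v w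
      = fderiv ℝ (fderiv ℝ F) (t, r) w v :=
    second_derivative_symmetric_of_eventually hev hf''
  set T := fderiv ℝ F (t, r) ((1:ℝ), (0:ℝ)) with hTdef
  set R := fderiv ℝ F (t, r) ((0:ℝ), (1:ℝ)) with hRdef
  set A := fderiv ℝ (fderiv ℝ F) (t, r) ((1:ℝ), (0:ℝ)) ((1:ℝ), (0:ℝ)) with hAdef
  set B := fderiv ℝ (fderiv ℝ F) (t, r) ((1:ℝ), (0:ℝ)) ((0:ℝ), (1:ℝ)) with hBdef
  set C := fderiv ℝ (fderiv ℝ F) (t, r) ((0:ℝ), (1:ℝ)) ((0:ℝ), (1:ℝ)) with hCdef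
  have hsymmBA : fderiv ℝ (fderiv ℝ F) (t, r) ((0:ℝ), (1:ℝ)) ((1:ℝ), (0:ℝ)) = B :=
    hsymm _ _
  have hT : ∀ t' r' : ℝ, (t', r') ∈ Ioo a b ×ˢ Ioi (0:ℝ) →
      pderivT Φ t' r' = fderiv ℝ F (t', r') ((1:ℝ), (0:ℝ)) := by
    intro t' r' hq
    have hline : HasDerivAt (fun s : ℝ => ((s, r') : ℝ × ℝ)) ((1:ℝ), (0:ℝ)) t' :=
      (hasDerivAt_id t').prodMk (hasDerivAt_const t' r')
    exact ((hdiff (t', r') hq).comp_hasDerivAt t' hline).deriv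
  have hR : ∀ t' r' : ℝ, (t', r') ∈ Ioo a b ×ˢ Ioi (0:ℝ) →
      pderivR Φ t' r' = fderiv ℝ F (t', r') ((0:ℝ), (1:ℝ)) := by
    intro t' r' hq
    have hline : HasDerivAt (fun ρ : ℝ => ((t', ρ) : ℝ × ℝ)) ((0:ℝ), (1:ℝ)) r' :=
      (hasDerivAt_const r' t').prodMk (hasDerivAt_id r')
    exact ((hdiff (t', r') hq).comp_hasDerivAt r' hline).deriv
  have hlineT : HasDerivAt (fun s : ℝ => ((s, r) : ℝ × ℝ)) ((1:ℝ), (0:ℝ)) t :=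
    (hasDerivAt_id t).prodMk (hasDerivAt_const t r)
  have hlineR : HasDerivAt (fun ρ : ℝ => ((t, ρ) : ℝ × ℝ)) ((0:ℝ), (1:ℝ)) r :=
    (hasDerivAt_const r t).prodMk (hasDerivAt_id r)
  have happT : ∀ e : ℝ × ℝ, HasDerivAt (fun s => fderiv ℝ F (s, r) e)
      (fderiv ℝ (fderiv ℝ F) (t, r) ((1:ℝ), (0:ℝ)) e) t := by
    intro e
    have k2 : HasDerivAt (fun _ : ℝ => e) 0 t := hasDerivAt_const t e
    have k1 := hf''.comp_hasDerivAt t hlineT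
    have k := HasDerivAt.clm_apply k1 k2
    simpa using k
  have happR : ∀ e : ℝ × ℝ, HasDerivAt (fun ρ => fderiv ℝ F (t, ρ) e)
      (fderiv ℝ (fderiv ℝ F) (t, r) ((0:ℝ), (1:ℝ)) e) r := by
    intro e
    have k2 : HasDerivAt (fun _ : ℝ => e) 0 r := hasDerivAt_const r e
    have k1 := hf''.comp_hasDerivAt r hlineR
    have k := HasDerivAt.clm_apply k1 k2
    simpa using k
  have hevT : ∀ᶠ s in nhds t, ((s, r) : ℝ × ℝ) ∈ Ioo a b ×ˢ Ioi (0:ℝ) :=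
    hlineT.continuousAt.preimage_mem_nhds hnhds
  have hevR : ∀ᶠ ρ in nhds r, ((t, ρ) : ℝ × ℝ) ∈ Ioo a b ×ˢ Ioi (0:ℝ) :=
    hlineR.continuousAt.preimage_mem_nhds hnhds
  -- second partials of Φ
  have hTT : pderivT (pderivT Φ) t r = A := by
    have heq : (fun s => pderivT Φ s r) =ᶠ[nhds t]
        fun s => fderiv ℝ F (s, r) ((1:ℝ), (0:ℝ)) := by
      filter_upwards [hevT] with s hs using hT s r hs
    show deriv (fun s => pderivT Φ s r) t = A
    rw [heq.deriv_eq]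
    exact (happT ((1:ℝ), (0:ℝ))).deriv
  have hCC : pderivR (pderivR Φ) t r = C := by
    have heq : (fun ρ => pderivR Φ t ρ) =ᶠ[nhds r]
        fun ρ => fderiv ℝ F (t, ρ) ((0:ℝ), (1:ℝ)) := by
      filter_upwards [hevR] with ρ hs using hR t ρ hs
    show deriv (fun ρ => pderivR Φ t ρ) r = C
    rw [heq.deriv_eq]
    exact (happR ((0:ℝ), (1:ℝ))).deriv
  -- derivatives of the null derivatives along the two lines
  have hVt : HasDerivAt (fun s => pderivV Φ s r) ((2:ℝ)⁻¹ • (A + B)) t := by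
    have h := (((happT ((1:ℝ), (0:ℝ))).add (happT ((0:ℝ), (1:ℝ)))).const_smul ((2:ℝ)⁻¹))
    apply h.congr_of_eventuallyEq
    filter_upwards [hevT] with s hs
    rw [pderivV, hT s r hs, hR s r hs]
    rfl
  have hVr : HasDerivAt (fun ρ => pderivV Φ t ρ) ((2:ℝ)⁻¹ • (B + C)) r := by
    have h := (((happR ((1:ℝ), (0:ℝ))).add (happR ((0:ℝ), (1:ℝ)))).const_smul ((2:ℝ)⁻¹))
    rw [hsymmBA] at h
    apply h.congr_of_eventuallyEq
    filter_upwards [hevR] with ρ hs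
    rw [pderivV, hT t ρ hs, hR t ρ hs]
    rfl
  have hUt : HasDerivAt (fun s => pderivU Φ s r) ((2:ℝ)⁻¹ • (A - B)) t := by
    have h := (((happT ((1:ℝ), (0:ℝ))).sub (happT ((0:ℝ), (1:ℝ)))).const_smul ((2:ℝ)⁻¹))
    apply h.congr_of_eventuallyEq
    filter_upwards [hevT] with s hs
    rw [pderivU, hT s r hs, hR s r hs]
    rfl
  have hUr : HasDerivAt (fun ρ => pderivU Φ t ρ) ((2:ℝ)⁻¹ • (B - C)) r := by
    have h := (((happR ((1:ℝ), (0:ℝ))).sub (happR ((0:ℝ), (1:ℝ)))).const_smul ((2:ℝ)⁻¹))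
    rw [hsymmBA] at h
    apply h.congr_of_eventuallyEq
    filter_upwards [hevR] with ρ hs
    rw [pderivU, hT t ρ hs, hR t ρ hs]
    rfl
  -- values at the point
  have hVval : pderivV Φ t r = (2:ℝ)⁻¹ • (T + R) := by
    rw [pderivV, hT t r hmem, hR t r hmem]
  have hUval : pderivU Φ t r = (2:ℝ)⁻¹ • (T - R) := by
    rw [pderivU, hT t r hmem, hR t r hmem]
  -- the orthogonality relation in terms of T, R, A, C
  have hO := horth t ht r hr
  rw [hT t r hmem, hR t r hmem, hTT, hCC] at hO
  have hO' : ⟪T, A⟫ - ⟪T, C⟫ - r⁻¹ * ⟪T, R⟫ = 0 := by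
    rw [inner_sub_right, inner_sub_right, real_inner_smul_right] at hO
    exact hO
  have hO2 : ⟪T, R⟫ = r * ⟪T, A⟫ - r * ⟪T, C⟫ := by
    have h1 : r⁻¹ * ⟪T, R⟫ = ⟪T, A⟫ - ⟪T, C⟫ := by linarith
    have h3 : r * (r⁻¹ * ⟪T, R⟫) = r * (⟪T, A⟫ - ⟪T, C⟫) := by rw [h1]
    rw [← mul_assoc, mul_inv_cancel₀ hr.ne', one_mul] at h3
    rw [h3]; ring
  -- the four scalar derivatives
  have e1t : pderivT (fun t' r' => r' ^ (1 - α) * ‖pderivV Φ t' r'‖ ^ 2) t r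
      = r ^ (1 - α) * (2 * ⟪pderivV Φ t r, (2:ℝ)⁻¹ • (A + B)⟫) :=
    (HasDerivAt.const_mul (r ^ (1 - α)) (hasDerivAt_norm_sq_aux hVt)).deriv
  have e1r : pderivR (fun t' r' => r' ^ (1 - α) * ‖pderivV Φ t' r'‖ ^ 2) t r
      = (1 - α) * r ^ (1 - α - 1) * ‖pderivV Φ t r‖ ^ 2
        + r ^ (1 - α) * (2 * ⟪pderivV Φ t r, (2:ℝ)⁻¹ • (B + C)⟫) :=
    ((Real.hasDerivAt_rpow_const (Or.inl hr.ne')).mul (hasDerivAt_norm_sq_aux hVr)).deriv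
  have e2t : pderivT (fun t' r' => r' ^ (1 - α) * ‖pderivU Φ t' r'‖ ^ 2) t r
      = r ^ (1 - α) * (2 * ⟪pderivU Φ t r, (2:ℝ)⁻¹ • (A - B)⟫) :=
    (HasDerivAt.const_mul (r ^ (1 - α)) (hasDerivAt_norm_sq_aux hUt)).deriv
  have e2r : pderivR (fun t' r' => r' ^ (1 - α) * ‖pderivU Φ t' r'‖ ^ 2) t r
      = (1 - α) * r ^ (1 - α - 1) * ‖pderivU Φ t r‖ ^ 2
        + r ^ (1 - α) * (2 * ⟪pderivU Φ t r, (2:ℝ)⁻¹ • (B - C)⟫) :=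
    ((Real.hasDerivAt_rpow_const (Or.inl hr.ne')).mul (hasDerivAt_norm_sq_aux hUr)).deriv
  -- put everything together
  rw [pderivU, pderivV, e1t, e1r, e2t, e2r, hVval, hUval]
  rw [show (1 - α - 1 : ℝ) = -α by ring]
  rw [show r ^ (1 - α) = r * r ^ (-α) by
    rw [show (1 - α : ℝ) = 1 + -α by ring, Real.rpow_add hr, Real.rpow_one]]
  simp only [← real_inner_self_eq_norm_sq]
  simp only [inner_add_left, inner_add_right, inner_sub_left, inner_sub_right,
    real_inner_smul_left, real_inner_smul_right, smul_eq_mul]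
  linear_combination (-(r ^ (-α)) / 2) * hO2 - (r ^ (-α) / 4) * real_inner_comm T R
end

section
/- Let k ≥ 1 and let q₀, q₁ : I × (0,∞) → ℝᵏ be continuously differentiable (I an open interval), and let A₀ : I × (0,∞) → ℝ^{k×k} be a continuous matrix-valued function which is skew-symmetric at every point (A₀ᵀ = −A₀). Assume the gauged wave map system: ∂_t q₀ + A₀ q₀ − (1/r) ∂_r (r q₁) = 0 and ∂_r q₀ = ∂_t q₁ + A₀ q₁ at every point. Then for every α ∈ ℝ the following divergence identity holds at every (t,r) with r > 0: −∂_t ( r^{1−α} q₀ · q₁ ) + ∂_r ( (1/2) r^{1−α} (|q₀|² + |q₁|²) ) − (1/2)(1−α) r^{−α} |q₀|² + (1/2)(1+α) r^{−α} |q₁|² = 0. -/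
open MeasureTheory Set Matrix

private lemma hasDerivAt_dot {k : ℕ} {f g : ℝ → Fin k → ℝ} {f' g' : Fin k → ℝ} {x : ℝ}
    (hf : HasDerivAt f f' x) (hg : HasDerivAt g g' x) :
    HasDerivAt (fun s => f s ⬝ᵥ g s) (f' ⬝ᵥ g x + f x ⬝ᵥ g') x := by
  have h : ∀ i : Fin k, HasDerivAt (fun s => f s i * g s i)
      (f' i * g x i + f x i * g' i) x := by
    intro i
    have hfi : HasDerivAt (fun s => f s i) (f' i) x :=
      (ContinuousLinearMap.proj (R := ℝ) (φ := fun _ : Fin k => ℝ) i).hasFDerivAt.comp_hasDerivAt x hf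
    have hgi : HasDerivAt (fun s => g s i) (g' i) x :=
      (ContinuousLinearMap.proj (R := ℝ) (φ := fun _ : Fin k => ℝ) i).hasFDerivAt.comp_hasDerivAt x hg
    exact hfi.mul hgi
  have hsum := HasDerivAt.fun_sum (fun i (_ : i ∈ Finset.univ) => h i)
  simpa [dotProduct, Finset.sum_add_distrib] using hsum

private lemma skew_dot {k : ℕ} {A : Matrix (Fin k) (Fin k) ℝ} (h : Aᵀ = -A)
    (x y : Fin k → ℝ) : x ⬝ᵥ (A *ᵥ y) = -((A *ᵥ x) ⬝ᵥ y) := by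
  have hA : A = (-A)ᵀ := by rw [← h, Matrix.transpose_transpose]
  rw [Matrix.dotProduct_mulVec]
  conv_lhs => rw [hA]
  rw [Matrix.vecMul_transpose, Matrix.neg_mulVec, neg_dotProduct]

/-- The divergence identity (2.19) for the gauged radially symmetric wave map
system: with `A₀` skew-symmetric,
`−∂_t(r^{1−α} q₀·q₁) + ∂_r((1/2) r^{1−α}(|q₀|²+|q₁|²))
  − (1/2)(1−α) r^{−α}|q₀|² + (1/2)(1+α) r^{−α}|q₁|² = 0`. -/
theorem stmt_7 (k : ℕ) (hk : 1 ≤ k) (a b : ℝ)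
    (q₀ q₁ : ℝ → ℝ → (Fin k → ℝ))
    (A₀ : ℝ → ℝ → Matrix (Fin k) (Fin k) ℝ)
    (hq₀ : ContDiffOn ℝ 1 (fun p : ℝ × ℝ => q₀ p.1 p.2) (Ioo a b ×ˢ Ioi 0))
    (hq₁ : ContDiffOn ℝ 1 (fun p : ℝ × ℝ => q₁ p.1 p.2) (Ioo a b ×ˢ Ioi 0))
    (hA₀ : ContinuousOn (fun p : ℝ × ℝ => A₀ p.1 p.2) (Ioo a b ×ˢ Ioi 0))
    (hskew : ∀ t ∈ Ioo a b, ∀ r : ℝ, 0 < r → (A₀ t r)ᵀ = -(A₀ t r))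
    (heq1 : ∀ t ∈ Ioo a b, ∀ r : ℝ, 0 < r →
      pderivT q₀ t r + (A₀ t r) *ᵥ (q₀ t r)
        - r⁻¹ • pderivR (fun t' r' => r' • q₁ t' r') t r = 0)
    (heq2 : ∀ t ∈ Ioo a b, ∀ r : ℝ, 0 < r →
      pderivR q₀ t r = pderivT q₁ t r + (A₀ t r) *ᵥ (q₁ t r)) :
    ∀ α : ℝ, ∀ t ∈ Ioo a b, ∀ r : ℝ, 0 < r →
      -(pderivT (fun t' r' => r' ^ (1 - α) * (q₀ t' r' ⬝ᵥ q₁ t' r')) t r)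
        + pderivR (fun t' r' =>
            (1 / 2) * r' ^ (1 - α) * (q₀ t' r' ⬝ᵥ q₀ t' r' + q₁ t' r' ⬝ᵥ q₁ t' r')) t r
        - (1 / 2) * (1 - α) * r ^ (-α) * (q₀ t r ⬝ᵥ q₀ t r)
        + (1 / 2) * (1 + α) * r ^ (-α) * (q₁ t r ⬝ᵥ q₁ t r) = 0 := by
  intro α t ht r hr
  have hmem : (t, r) ∈ Ioo a b ×ˢ Ioi 0 := ⟨ht, hr⟩
  have hopen : IsOpen (Ioo a b ×ˢ Ioi (0:ℝ)) := isOpen_Ioo.prod isOpen_Ioi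
  have hq₀' : DifferentiableAt ℝ (fun p : ℝ × ℝ => q₀ p.1 p.2) (t, r) :=
    (hq₀.differentiableOn one_ne_zero).differentiableAt (hopen.mem_nhds hmem)
  have hq₁' : DifferentiableAt ℝ (fun p : ℝ × ℝ => q₁ p.1 p.2) (t, r) :=
    (hq₁.differentiableOn one_ne_zero).differentiableAt (hopen.mem_nhds hmem)
  -- slice differentiability
  have hslT : DifferentiableAt ℝ (fun s : ℝ => (s, r)) t :=
    differentiableAt_id.prodMk (differentiableAt_const r)
  have hslR : DifferentiableAt ℝ (fun r' : ℝ => (t, r')) r :=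
    (differentiableAt_const t).prodMk differentiableAt_id
  have hP0 : HasDerivAt (fun s => q₀ s r) (pderivT q₀ t r) t := by
    have h := hq₀'.comp t hslT
    exact (show DifferentiableAt ℝ (fun s => q₀ s r) t from h).hasDerivAt
  have hP1 : HasDerivAt (fun s => q₁ s r) (pderivT q₁ t r) t := by
    have h := hq₁'.comp t hslT
    exact (show DifferentiableAt ℝ (fun s => q₁ s r) t from h).hasDerivAt
  have hR0 : HasDerivAt (fun r' => q₀ t r') (pderivR q₀ t r) r := by
    have h := hq₀'.comp r hslR
    exact (show DifferentiableAt ℝ (fun r' => q₀ t r') r from h).hasDerivAt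
  have hR1 : HasDerivAt (fun r' => q₁ t r') (pderivR q₁ t r) r := by
    have h := hq₁'.comp r hslR
    exact (show DifferentiableAt ℝ (fun r' => q₁ t r') r from h).hasDerivAt
  set P0 := pderivT q₀ t r with hP0def
  set P1 := pderivT q₁ t r with hP1def
  set R0 := pderivR q₀ t r with hR0def
  set R1 := pderivR q₁ t r with hR1def
  -- pderivT of the product
  have hdotT : HasDerivAt (fun s => q₀ s r ⬝ᵥ q₁ s r)
      (P0 ⬝ᵥ q₁ t r + q₀ t r ⬝ᵥ P1) t := hasDerivAt_dot hP0 hP1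
  have eT : pderivT (fun t' r' => r' ^ (1 - α) * (q₀ t' r' ⬝ᵥ q₁ t' r')) t r
      = r ^ (1 - α) * (P0 ⬝ᵥ q₁ t r + q₀ t r ⬝ᵥ P1) :=
    (hdotT.const_mul (r ^ (1 - α))).deriv
  -- pderivR of the energy density
  have hrpow : HasDerivAt (fun x : ℝ => x ^ (1 - α)) ((1 - α) * r ^ (1 - α - 1)) r :=
    Real.hasDerivAt_rpow_const (Or.inl hr.ne')
  have hc : HasDerivAt (fun x : ℝ => (1 / 2 : ℝ) * x ^ (1 - α))
      ((1 / 2 : ℝ) * ((1 - α) * r ^ (1 - α - 1))) r := hrpow.const_mul _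
  have hdotR0 : HasDerivAt (fun r' => q₀ t r' ⬝ᵥ q₀ t r')
      (R0 ⬝ᵥ q₀ t r + q₀ t r ⬝ᵥ R0) r := hasDerivAt_dot hR0 hR0
  have hdotR1 : HasDerivAt (fun r' => q₁ t r' ⬝ᵥ q₁ t r')
      (R1 ⬝ᵥ q₁ t r + q₁ t r ⬝ᵥ R1) r := hasDerivAt_dot hR1 hR1
  have eR : pderivR (fun t' r' =>
      (1 / 2) * r' ^ (1 - α) * (q₀ t' r' ⬝ᵥ q₀ t' r' + q₁ t' r' ⬝ᵥ q₁ t' r')) t r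
      = (1 / 2 : ℝ) * ((1 - α) * r ^ (1 - α - 1))
          * (q₀ t r ⬝ᵥ q₀ t r + q₁ t r ⬝ᵥ q₁ t r)
        + (1 / 2 : ℝ) * r ^ (1 - α)
          * ((R0 ⬝ᵥ q₀ t r + q₀ t r ⬝ᵥ R0) + (R1 ⬝ᵥ q₁ t r + q₁ t r ⬝ᵥ R1)) :=
    (hc.mul (hdotR0.add hdotR1)).deriv
  -- unfold heq1
  have hRs : pderivR (fun t' r' => r' • q₁ t' r') t r = r • R1 + q₁ t r := by
    have h : HasDerivAt (fun r' => r' • q₁ t r') (r • R1 + (1:ℝ) • q₁ t r) r :=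
      (hasDerivAt_id' (x := r)).smul hR1
    simpa [pderivR] using h.deriv
  have h1 := heq1 t ht r hr
  rw [hRs] at h1
  have h2 := heq2 t ht r hr
  -- scalar consequences
  have hX : P0 ⬝ᵥ q₁ t r
      = r⁻¹ * (r * (R1 ⬝ᵥ q₁ t r) + q₁ t r ⬝ᵥ q₁ t r)
        - (A₀ t r *ᵥ q₀ t r) ⬝ᵥ q₁ t r := by
    have h1' := congrArg (fun v => v ⬝ᵥ q₁ t r) h1
    simp only [sub_dotProduct, add_dotProduct, smul_dotProduct,
      smul_eq_mul, zero_dotProduct] at h1'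
    linear_combination h1'
  have hY : q₀ t r ⬝ᵥ P1
      = q₀ t r ⬝ᵥ R0 - q₀ t r ⬝ᵥ (A₀ t r *ᵥ q₁ t r) := by
    have h2' := congrArg (fun v => q₀ t r ⬝ᵥ v) h2
    simp only [dotProduct_add] at h2'
    rw [← hR0def, ← hP1def] at h2'
    linear_combination -h2'
  have hsk : q₀ t r ⬝ᵥ (A₀ t r *ᵥ q₁ t r)
      = -((A₀ t r *ᵥ q₀ t r) ⬝ᵥ q₁ t r) := skew_dot (hskew t ht r hr) _ _
  have hc0 : R0 ⬝ᵥ q₀ t r = q₀ t r ⬝ᵥ R0 := dotProduct_comm _ _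
  have hc1 : R1 ⬝ᵥ q₁ t r = q₁ t r ⬝ᵥ R1 := dotProduct_comm _ _
  -- power identities
  have hp1 : r ^ (1 - α) = r * r ^ (-α) := by
    rw [show (1 - α) = 1 + (-α) by ring, Real.rpow_add hr, Real.rpow_one]
  have hp2 : r ^ (1 - α - 1) = r ^ (-α) := by
    congr 1; ring
  rw [eT, eR, hX, hY, hsk, hc0, hc1, hp1, hp2]
  field_simp
  ring
end

section
/- Let α, σ ∈ ℝ with 1 + α − 2σ > 0, and let f : (0,∞) → [0,∞) be measurable. Then the weighted Hardy inequality holds: ∫₀^∞ r^{2σ−2−α} ( ∫₀^r ξ^{−σ} f(ξ) dξ )² dr ≤ ( 2/(1+α−2σ) )² ∫₀^∞ r^{−α} f(r)² dr. -/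
open MeasureTheory Set

lemma L1 (a r : ℝ) (ha : -1 < a) (hr : 0 < r) :
    ∫⁻ ξ in Ioc (0:ℝ) r, ENNReal.ofReal (ξ ^ a) = ENNReal.ofReal (r ^ (a+1) / (a+1)) := by
  have hint : IntegrableOn (fun ξ : ℝ => ξ ^ a) (Ioc 0 r) := by
    rw [← intervalIntegrable_iff_integrableOn_Ioc_of_le hr.le]
    exact intervalIntegral.intervalIntegrable_rpow' ha
  rw [← ofReal_integral_eq_lintegral_ofReal hint]
  · congr 1
    rw [← intervalIntegral.integral_of_le hr.le, integral_rpow (Or.inl ha),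
      Real.zero_rpow (by linarith), sub_zero]
  · filter_upwards [ae_restrict_mem measurableSet_Ioc] with ξ hξ
    exact Real.rpow_nonneg hξ.1.le a

lemma L2 (c ξ : ℝ) (hc : c < -1) (hξ : 0 < ξ) :
    ∫⁻ r in Ici ξ, ENNReal.ofReal (r ^ c) = ENNReal.ofReal (ξ ^ (c+1) / (-(c+1))) := by
  rw [setLIntegral_congr (Ioi_ae_eq_Ici (a := ξ)).symm,
    ← ofReal_integral_eq_lintegral_ofReal (integrableOn_Ioi_rpow_of_lt hc hξ)]
  · rw [integral_Ioi_rpow_of_lt hc hξ]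
    congr 1
    rw [neg_div, div_neg]
  · filter_upwards [ae_restrict_mem measurableSet_Ioi] with r hr
    exact Real.rpow_nonneg (hξ.trans hr).le c

lemma CS {g h : ℝ → ENNReal} (μ : Measure ℝ) (hg : AEMeasurable g μ) (hh : AEMeasurable h μ) :
    (∫⁻ x, g x * h x ∂μ) ^ 2 ≤ (∫⁻ x, g x ^ 2 ∂μ) * (∫⁻ x, h x ^ 2 ∂μ) := by
  have hpq : Real.HolderConjugate 2 2 := ⟨by norm_num, by norm_num, by norm_num⟩
  have H := ENNReal.lintegral_mul_le_Lp_mul_Lq μ hpq hg hh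
  calc (∫⁻ x, g x * h x ∂μ) ^ 2
      ≤ ((∫⁻ x, g x ^ (2:ℝ) ∂μ) ^ (1/2:ℝ) * (∫⁻ x, h x ^ (2:ℝ) ∂μ) ^ (1/2:ℝ)) ^ 2 :=
        pow_le_pow_left' H 2
    _ = (∫⁻ x, g x ^ 2 ∂μ) * (∫⁻ x, h x ^ 2 ∂μ) := by
        rw [mul_pow, ← ENNReal.rpow_natCast (_ ^ (1/2:ℝ)), ← ENNReal.rpow_natCast (_ ^ (1/2:ℝ)),
          ← ENNReal.rpow_mul, ← ENNReal.rpow_mul]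
        norm_num [ENNReal.rpow_two]

set_option maxHeartbeats 1000000 in
/-- Weighted Hardy inequality: for `1 + α − 2σ > 0` and measurable `f ≥ 0`,
`∫₀^∞ r^{2σ−2−α} (∫₀^r ξ^{−σ} f(ξ) dξ)² dr ≤ (2/(1+α−2σ))² ∫₀^∞ r^{−α} f(r)² dr`,
both sides being allowed to be infinite. -/
theorem stmt_9 (α σ : ℝ) (h : 0 < 1 + α - 2 * σ)
    (f : ℝ → ENNReal) (hf : Measurable f) :
    ∫⁻ r in Ioi (0 : ℝ),
        ENNReal.ofReal (r ^ (2 * σ - 2 - α)) *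
          (∫⁻ ξ in Ioc (0 : ℝ) r, ENNReal.ofReal (ξ ^ (-σ)) * f ξ) ^ 2
      ≤ ENNReal.ofReal ((2 / (1 + α - 2 * σ)) ^ 2) *
          ∫⁻ r in Ioi (0 : ℝ), ENNReal.ofReal (r ^ (-α)) * (f r) ^ 2 := by
  set β := 1 + α - 2 * σ with hβdef
  have hβ : 0 < β := h
  set a : ℝ := (β - 2) / 2 with hadef
  set c : ℝ := -(β + 2) / 2 with hcdef
  have ha : -1 < a := by rw [hadef]; linarith
  have hc : c < -1 := by rw [hcdef]; linarith
  have ha1 : a + 1 = β / 2 := by rw [hadef]; ring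
  set G : ℝ → ENNReal := fun ξ => ENNReal.ofReal (ξ ^ (-a - 2*σ)) * f ξ ^ 2 with hGdef
  have hrc : Measurable fun x : ℝ => x ^ c := by measurability
  have hGmeas : Measurable G := by
    apply Measurable.mul _ (hf.pow_const 2)
    apply Measurable.ennreal_ofReal
    measurability
  -- Step 1: pointwise Cauchy–Schwarz
  have step1 : ∀ r : ℝ, 0 < r →
      (∫⁻ ξ in Ioc (0:ℝ) r, ENNReal.ofReal (ξ ^ (-σ)) * f ξ) ^ 2
        ≤ ENNReal.ofReal (r ^ (a+1) / (a+1)) * ∫⁻ ξ in Ioc (0:ℝ) r, G ξ := by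
    intro r hr
    have e1 : ∫⁻ ξ in Ioc (0:ℝ) r, ENNReal.ofReal (ξ ^ (-σ)) * f ξ
        = ∫⁻ ξ in Ioc (0:ℝ) r,
            ENNReal.ofReal (ξ ^ (a/2)) * (ENNReal.ofReal (ξ ^ (-(a/2) - σ)) * f ξ) := by
      refine setLIntegral_congr_fun measurableSet_Ioc (fun ξ hξ => ?_)
      rw [← mul_assoc, ← ENNReal.ofReal_mul (Real.rpow_nonneg hξ.1.le _),
        ← Real.rpow_add hξ.1, show a/2 + (-(a/2) - σ) = -σ by ring]
    rw [e1, ← L1 a r ha hr]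
    have hg : AEMeasurable (fun ξ : ℝ => ENNReal.ofReal (ξ ^ (a/2)))
        (volume.restrict (Ioc 0 r)) := by
      apply Measurable.aemeasurable; apply Measurable.ennreal_ofReal; measurability
    have hh : AEMeasurable (fun ξ : ℝ => ENNReal.ofReal (ξ ^ (-(a/2) - σ)) * f ξ)
        (volume.restrict (Ioc 0 r)) := by
      apply Measurable.aemeasurable
      apply Measurable.mul _ hf
      apply Measurable.ennreal_ofReal; measurability
    refine (CS _ hg hh).trans (le_of_eq ?_)
    congr 1
    · refine setLIntegral_congr_fun measurableSet_Ioc (fun ξ hξ => ?_)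
      rw [sq, ← ENNReal.ofReal_mul (Real.rpow_nonneg hξ.1.le _), ← Real.rpow_add hξ.1,
        show a/2 + a/2 = a by ring]
    · refine setLIntegral_congr_fun measurableSet_Ioc (fun ξ hξ => ?_)
      rw [mul_pow, sq (ENNReal.ofReal _), ← ENNReal.ofReal_mul (Real.rpow_nonneg hξ.1.le _),
        ← Real.rpow_add hξ.1, show -(a/2) - σ + (-(a/2) - σ) = -a - 2*σ by ring]
  -- Step 2: Fubini
  have key : ∫⁻ r in Ioi (0:ℝ), ENNReal.ofReal (r ^ c) * ∫⁻ ξ in Ioc (0:ℝ) r, G ξ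
      = ∫⁻ ξ in Ioi (0:ℝ), G ξ * ENNReal.ofReal (ξ ^ (c+1) / (-(c+1))) := by
    set S : Set (ℝ × ℝ) := {q | 0 < q.2 ∧ q.2 ≤ q.1} with hSdef
    have hS : MeasurableSet S := by
      have : S = {q : ℝ × ℝ | 0 < q.2} ∩ {q | q.2 ≤ q.1} := rfl
      rw [this]
      exact (measurableSet_lt measurable_const measurable_snd).inter
        (measurableSet_le measurable_snd measurable_fst)
    set F : ℝ × ℝ → ENNReal :=
      fun q => S.indicator (fun q => ENNReal.ofReal (q.1 ^ c) * G q.2) q with hFdef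
    have hF : Measurable F := by
      apply Measurable.indicator _ hS
      exact ((hrc.comp measurable_fst).ennreal_ofReal).mul (hGmeas.comp measurable_snd)
    calc ∫⁻ r in Ioi (0:ℝ), ENNReal.ofReal (r ^ c) * ∫⁻ ξ in Ioc (0:ℝ) r, G ξ
        = ∫⁻ r in Ioi (0:ℝ), ∫⁻ ξ, F (r, ξ) := by
          refine lintegral_congr fun r => ?_
          have : (fun ξ => F (r, ξ)) = (Ioc 0 r).indicator (fun ξ => ENNReal.ofReal (r ^ c) * G ξ) := by
            funext ξ
            by_cases hm : ξ ∈ Ioc (0:ℝ) r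
            · rw [hFdef]
              simp only
              rw [Set.indicator_of_mem (show (r, ξ) ∈ S from ⟨hm.1, hm.2⟩),
                Set.indicator_of_mem hm]
            · rw [hFdef]
              simp only
              rw [Set.indicator_of_notMem (show (r, ξ) ∉ S from fun hmem => hm ⟨hmem.1, hmem.2⟩),
                Set.indicator_of_notMem hm]
          rw [this, lintegral_indicator measurableSet_Ioc,
            lintegral_const_mul' _ _ ENNReal.ofReal_ne_top]
      _ = ∫⁻ ξ, ∫⁻ r in Ioi (0:ℝ), F (r, ξ) :=
          lintegral_lintegral_swap hF.aemeasurable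
      _ = ∫⁻ ξ in Ioi (0:ℝ), ∫⁻ r in Ioi (0:ℝ), F (r, ξ) := by
          rw [← lintegral_indicator measurableSet_Ioi]
          refine lintegral_congr fun ξ => ?_
          by_cases hξ : (0:ℝ) < ξ
          · exact (Set.indicator_of_mem (Set.mem_Ioi.mpr hξ) (fun ξ => ∫⁻ r in Ioi (0:ℝ), F (r, ξ))).symm
          · have hz : ∀ r : ℝ, F (r, ξ) = 0 := fun r =>
              Set.indicator_of_notMem (fun hmem => hξ hmem.1) _
            exact ((lintegral_congr hz).trans lintegral_zero).trans
              (Set.indicator_of_notMem (fun hm => hξ (Set.mem_Ioi.mp hm)) _).symm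
      _ = ∫⁻ ξ in Ioi (0:ℝ), G ξ * ENNReal.ofReal (ξ ^ (c+1) / (-(c+1))) := by
          refine setLIntegral_congr_fun measurableSet_Ioi (fun ξ hξ => ?_)
          have hind : ∀ r : ℝ, F (r, ξ) = (Ici ξ).indicator (fun r => ENNReal.ofReal (r ^ c) * G ξ) r := by
            intro r
            by_cases hr : ξ ≤ r
            · rw [hFdef]
              simp only
              rw [Set.indicator_of_mem (show (r, ξ) ∈ S from ⟨hξ, hr⟩),
                Set.indicator_of_mem (Set.mem_Ici.mpr hr)]
            · rw [hFdef]
              simp only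
              rw [Set.indicator_of_notMem (show (r, ξ) ∉ S from fun hmem => hr hmem.2),
                Set.indicator_of_notMem (by simpa using hr)]
          simp only [hind]
          have hsub : Ici ξ ∩ Ioi (0:ℝ) = Ici ξ :=
            Set.inter_eq_left.mpr fun x hx => Set.mem_Ioi.mpr (lt_of_lt_of_le hξ hx)
          rw [lintegral_indicator measurableSet_Ici,
            Measure.restrict_restrict measurableSet_Ici, hsub,
            lintegral_mul_const _ (hrc.ennreal_ofReal), L2 c ξ hc hξ, mul_comm]
  -- Main chain
  calc ∫⁻ r in Ioi (0:ℝ), ENNReal.ofReal (r ^ (2*σ - 2 - α)) *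
          (∫⁻ ξ in Ioc (0:ℝ) r, ENNReal.ofReal (ξ ^ (-σ)) * f ξ) ^ 2
      ≤ ∫⁻ r in Ioi (0:ℝ), ENNReal.ofReal (2/β) *
          (ENNReal.ofReal (r ^ c) * ∫⁻ ξ in Ioc (0:ℝ) r, G ξ) := by
        refine lintegral_mono_ae ?_
        filter_upwards [ae_restrict_mem measurableSet_Ioi] with r hr
        have hr0 : (0:ℝ) < r := hr
        calc ENNReal.ofReal (r ^ (2*σ - 2 - α)) *
              (∫⁻ ξ in Ioc (0:ℝ) r, ENNReal.ofReal (ξ ^ (-σ)) * f ξ) ^ 2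
            ≤ ENNReal.ofReal (r ^ (2*σ - 2 - α)) *
              (ENNReal.ofReal (r ^ (a+1) / (a+1)) * ∫⁻ ξ in Ioc (0:ℝ) r, G ξ) :=
              mul_le_mul_right (step1 r hr0) _
          _ = ENNReal.ofReal (2/β) *
              (ENNReal.ofReal (r ^ c) * ∫⁻ ξ in Ioc (0:ℝ) r, G ξ) := by
              rw [← mul_assoc, ← mul_assoc, ← ENNReal.ofReal_mul (Real.rpow_nonneg hr0.le _),
                ← ENNReal.ofReal_mul (by positivity)]
              congr 2
              rw [ha1]
              calc r ^ (2*σ - 2 - α) * (r ^ (β/2) / (β/2))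
                  = (2/β) * (r ^ (2*σ - 2 - α) * r ^ (β/2)) := by
                    field_simp
                _ = 2/β * r ^ c := by
                    rw [← Real.rpow_add hr0,
                      show 2*σ - 2 - α + β/2 = c by rw [hcdef, hβdef]; ring]
    _ = ENNReal.ofReal (2/β) *
          ∫⁻ r in Ioi (0:ℝ), ENNReal.ofReal (r ^ c) * ∫⁻ ξ in Ioc (0:ℝ) r, G ξ :=
        lintegral_const_mul' _ _ ENNReal.ofReal_ne_top
    _ = ENNReal.ofReal (2/β) * ∫⁻ ξ in Ioi (0:ℝ), G ξ * ENNReal.ofReal (ξ ^ (c+1) / (-(c+1))) := by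
        rw [key]
    _ = ENNReal.ofReal (2/β) * ∫⁻ ξ in Ioi (0:ℝ),
          ENNReal.ofReal (2/β) * (ENNReal.ofReal (ξ ^ (-α)) * f ξ ^ 2) := by
        congr 1
        refine setLIntegral_congr_fun measurableSet_Ioi (fun ξ hξ => ?_)
        have hξ0 : (0:ℝ) < ξ := hξ
        rw [hGdef]
        simp only
        have hc1 : ξ ^ (c+1) / (-(c+1)) = ξ ^ (c+1) * (2/β) := by
          rw [show -(c+1) = β/2 by rw [hcdef]; ring, div_eq_mul_inv, inv_div]
        rw [hc1, ENNReal.ofReal_mul (Real.rpow_nonneg hξ0.le _)]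
        rw [show ENNReal.ofReal (ξ ^ (-a - 2*σ)) * f ξ ^ 2 *
              (ENNReal.ofReal (ξ ^ (c+1)) * ENNReal.ofReal (2/β))
            = ENNReal.ofReal (2/β) *
              ((ENNReal.ofReal (ξ ^ (-a - 2*σ)) * ENNReal.ofReal (ξ ^ (c+1))) * f ξ ^ 2) by ring]
        congr 2
        rw [← ENNReal.ofReal_mul (Real.rpow_nonneg hξ0.le _), ← Real.rpow_add hξ0,
          show -a - 2*σ + (c+1) = -α by rw [hadef, hcdef, hβdef]; ring]
    _ = ENNReal.ofReal ((2/β)^2) *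
          ∫⁻ r in Ioi (0:ℝ), ENNReal.ofReal (r ^ (-α)) * f r ^ 2 := by
        rw [lintegral_const_mul' _ _ ENNReal.ofReal_ne_top, ← mul_assoc,
          ← ENNReal.ofReal_mul (by positivity), ← sq]
end

section
/- Let n ≥ 1 and let β satisfy 1/10 ≤ β ≤ 1/4. There exists a constant C = C(β) > 0 such that for every continuously differentiable compactly supported function Ψ : (0,∞) → ℝⁿ the following Sobolev–Hardy interpolation inequality holds: ∫₀^∞ |Ψ(r)|⁴ r^β dr ≤ C ( ∫₀^∞ |Ψ(r)|² r^{−β} dr ) · ( ∫₀^∞ |Ψ(r)|² r dr )^{β} · ( ∫₀^∞ |Ψ'(r)|² r dr )^{1−β}. -/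
open MeasureTheory Set
open scoped RealInnerProductSpace

lemma cs_aux {μ : Measure ℝ} {u v : ℝ → ℝ}
    (hu : AEStronglyMeasurable u μ) (hv : AEStronglyMeasurable v μ)
    (hu0 : 0 ≤ᵐ[μ] u) (hv0 : 0 ≤ᵐ[μ] v)
    (hu2 : Integrable (fun x => u x ^ 2) μ) (hv2 : Integrable (fun x => v x ^ 2) μ) :
    ∫ x, u x * v x ∂μ ≤ Real.sqrt (∫ x, u x ^ 2 ∂μ) * Real.sqrt (∫ x, v x ^ 2 ∂μ) := by
  have h2 : Real.HolderConjugate 2 2 := by constructor <;> norm_num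
  have he : (ENNReal.ofReal 2) = 2 := by norm_num
  have hmu : MemLp u (ENNReal.ofReal 2) μ := by
    rw [he]; exact (memLp_two_iff_integrable_sq hu).2 hu2
  have hmv : MemLp v (ENNReal.ofReal 2) μ := by
    rw [he]; exact (memLp_two_iff_integrable_sq hv).2 hv2
  have H := MeasureTheory.integral_mul_le_Lp_mul_Lq_of_nonneg h2 hu0 hv0 hmu hmv
  have hc : ∀ y : ℝ, y ^ (2:ℝ) = y ^ 2 := fun y => by
    rw [show (2:ℝ) = ((2:ℕ):ℝ) by norm_num, Real.rpow_natCast]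
  simp only [hc] at H
  rw [Real.sqrt_eq_rpow, Real.sqrt_eq_rpow]
  simpa using H

lemma cs_on_Ioc {r₀ b' : ℝ} (h0 : 0 < r₀) (hle : r₀ ≤ b') {u v : ℝ → ℝ}
    (hu : ContinuousOn u (Icc r₀ b')) (hv : ContinuousOn v (Icc r₀ b'))
    (hu0 : ∀ x ∈ Ioc r₀ b', 0 ≤ u x) (hv0 : ∀ x ∈ Ioc r₀ b', 0 ≤ v x) :
    ∫ x in Ioc r₀ b', u x * v x ≤
      Real.sqrt (∫ x in Ioc r₀ b', u x ^ 2) * Real.sqrt (∫ x in Ioc r₀ b', v x ^ 2) := by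
  have hsub : Ioc r₀ b' ⊆ Icc r₀ b' := Ioc_subset_Icc_self
  have hum : AEStronglyMeasurable u (volume.restrict (Ioc r₀ b')) :=
    (hu.mono hsub).aestronglyMeasurable measurableSet_Ioc
  have hvm : AEStronglyMeasurable v (volume.restrict (Ioc r₀ b')) :=
    (hv.mono hsub).aestronglyMeasurable measurableSet_Ioc
  have hu0' : 0 ≤ᵐ[volume.restrict (Ioc r₀ b')] u :=
    (ae_restrict_iff' measurableSet_Ioc).2 (Filter.Eventually.of_forall hu0)
  have hv0' : 0 ≤ᵐ[volume.restrict (Ioc r₀ b')] v :=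
    (ae_restrict_iff' measurableSet_Ioc).2 (Filter.Eventually.of_forall hv0)
  have hu2 : IntegrableOn (fun x => u x ^ 2) (Ioc r₀ b') :=
    ((hu.pow 2).integrableOn_compact isCompact_Icc).mono_set hsub
  have hv2 : IntegrableOn (fun x => v x ^ 2) (Ioc r₀ b') :=
    ((hv.pow 2).integrableOn_compact isCompact_Icc).mono_set hsub
  exact cs_aux hum hvm hu0' hv0' hu2 hv2

set_option maxHeartbeats 1000000 in
/-- Sobolev–Hardy interpolation inequality: for `1/10 ≤ β ≤ 1/4` there is a
constant `C = C(β)` such that for all `C¹` compactly supported `Ψ : (0,∞) → ℝⁿ`,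
`∫₀^∞ |Ψ|⁴ r^β dr ≤ C (∫₀^∞ |Ψ|² r^{−β} dr)(∫₀^∞ |Ψ|² r dr)^β (∫₀^∞ |Ψ'|² r dr)^{1−β}`. -/
theorem stmt_10 (n : ℕ) (hn : 1 ≤ n) (β : ℝ) (hβ₁ : 1 / 10 ≤ β) (hβ₂ : β ≤ 1 / 4) :
    ∃ C : ℝ, 0 < C ∧
      ∀ Ψ : ℝ → EuclideanSpace ℝ (Fin n),
        ContDiff ℝ 1 Ψ → HasCompactSupport Ψ → tsupport Ψ ⊆ Ioi 0 →
        (∫ r in Ioi (0 : ℝ), ‖Ψ r‖ ^ 4 * r ^ β) ≤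
          C * (∫ r in Ioi (0 : ℝ), ‖Ψ r‖ ^ 2 * r ^ (-β)) *
            (∫ r in Ioi (0 : ℝ), ‖Ψ r‖ ^ 2 * r) ^ β *
            (∫ r in Ioi (0 : ℝ), ‖deriv Ψ r‖ ^ 2 * r) ^ (1 - β) := by
  have hβ0 : (0:ℝ) < β := by linarith
  have h2β : 2*β ≤ 1/2 := by linarith
  have hC0 : (0:ℝ) < (2/β) ^ (1-2*β) * (2:ℝ) ^ (2*β) :=
    mul_pos (Real.rpow_pos_of_pos (div_pos two_pos hβ0) _) (Real.rpow_pos_of_pos two_pos _)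
  refine ⟨(2/β) ^ (1-2*β) * (2:ℝ) ^ (2*β), hC0, ?_⟩
  intro Ψ hΨ hcs hsupp
  set A := ∫ r in Ioi (0 : ℝ), ‖Ψ r‖ ^ 2 * r ^ (-β) with hA_def
  set B := ∫ r in Ioi (0 : ℝ), ‖Ψ r‖ ^ 2 * r with hB_def
  set D := ∫ r in Ioi (0 : ℝ), ‖deriv Ψ r‖ ^ 2 * r with hD_def
  have hA0 : 0 ≤ A := by
    apply setIntegral_nonneg measurableSet_Ioi
    intro x hx; exact mul_nonneg (by positivity) (Real.rpow_nonneg (le_of_lt hx) _)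
  have hB0 : 0 ≤ B := by
    apply setIntegral_nonneg measurableSet_Ioi
    intro x hx; have : (0:ℝ) < x := hx; positivity
  have hD0 : 0 ≤ D := by
    apply setIntegral_nonneg measurableSet_Ioi
    intro x hx; have : (0:ℝ) < x := hx; positivity
  have hΨd : Differentiable ℝ Ψ := hΨ.differentiable one_ne_zero
  have hΨc : Continuous Ψ := hΨd.continuous
  have hΨ'c : Continuous (deriv Ψ) := hΨ.continuous_deriv le_rfl
  -- the sup function
  set h : ℝ → ℝ := fun r => ‖Ψ r‖^2 * r ^ (2*β) with hh_def
  have hh_cont : Continuous h := by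
    apply (hΨc.norm.pow 2).mul
    apply continuous_iff_continuousAt.2
    intro x
    exact Real.continuousAt_rpow_const x _ (Or.inr (by positivity))
  have hh_supp : HasCompactSupport h := by
    apply HasCompactSupport.intro hcs
    intro x hx
    simp [hh_def, image_eq_zero_of_notMem_tsupport hx]
  obtain ⟨r₀, hr₀⟩ := hh_cont.exists_forall_ge_of_hasCompactSupport hh_supp
  set M := h r₀ with hM_def
  have hM0 : 0 ≤ M := by
    refine le_trans ?_ (hr₀ 1)
    simp only [hh_def]
    positivity
  rcases eq_or_lt_of_le hM0 with hM | hM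
  · -- trivial case : M = 0, all of Ψ vanishes on Ioi 0
    have hzero : ∀ x ∈ Ioi (0:ℝ), ‖Ψ x‖ ^ 4 * x ^ β = 0 := by
      intro x hx
      have hx0 : (0:ℝ) < x := hx
      have h1 : h x ≤ 0 := le_of_le_of_eq (hr₀ x) hM.symm
      have h2 : 0 ≤ ‖Ψ x‖^2 := by positivity
      have h3 : (0:ℝ) < x ^ (2*β) := Real.rpow_pos_of_pos hx0 _
      have h4 : ‖Ψ x‖ = 0 := by
        by_contra hne
        have : 0 < ‖Ψ x‖^2 := by positivity
        simp only [hh_def] at h1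
        nlinarith [mul_pos this h3]
      rw [h4]; ring
    have hL : (∫ r in Ioi (0 : ℝ), ‖Ψ r‖ ^ 4 * r ^ β) = 0 := by
      rw [setIntegral_congr_fun measurableSet_Ioi hzero]; simp
    rw [hL]
    exact mul_nonneg (mul_nonneg (mul_nonneg hC0.le hA0) (Real.rpow_nonneg hB0 _))
      (Real.rpow_nonneg hD0 _)
  · -- main case : 0 < M
    have hΨr₀ : Ψ r₀ ≠ 0 := by
      intro h0
      simp only [hM_def, hh_def, h0, norm_zero] at hM
      nlinarith [hM]
    have hr₀K : r₀ ∈ tsupport Ψ := subset_tsupport Ψ (by simpa [Function.mem_support] using hΨr₀)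
    have hr₀pos : 0 < r₀ := hsupp hr₀K
    have hKne : (tsupport Ψ).Nonempty := ⟨r₀, hr₀K⟩
    set b' := sSup (tsupport Ψ) + 1 with hb'_def
    have hbK : ∀ x ∈ tsupport Ψ, x ≤ sSup (tsupport Ψ) :=
      fun x hx => le_csSup hcs.isBounded.bddAbove hx
    have hr₀b' : r₀ < b' := lt_of_le_of_lt (hbK r₀ hr₀K) (lt_add_one _)
    have hΨ0 : ∀ x, b' ≤ x → Ψ x = 0 := by
      intro x hx
      apply image_eq_zero_of_notMem_tsupport
      intro hxK
      have := hbK x hxK; simp only [hb'_def] at hx; linarith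
    set a := sInf (tsupport Ψ) with ha_def
    have haK : ∀ x ∈ tsupport Ψ, a ≤ x := fun x hx => csInf_le hcs.isBounded.bddBelow hx
    have ha0 : 0 < a := hsupp (hcs.sInf_mem hKne)
    have hIocsub : Ioc r₀ b' ⊆ Ioi (0:ℝ) := fun x hx => lt_trans hr₀pos hx.1
    -- integrability of B and D integrands
    have hBint : IntegrableOn (fun r => ‖Ψ r‖^2 * r) (Ioi 0) := by
      refine (Continuous.integrable_of_hasCompactSupport
        ((hΨc.norm.pow 2).mul continuous_id) ?_).integrableOn
      exact HasCompactSupport.intro hcs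
        (fun x hx => by simp [image_eq_zero_of_notMem_tsupport hx])
    have hDint : IntegrableOn (fun r => ‖deriv Ψ r‖^2 * r) (Ioi 0) := by
      refine (Continuous.integrable_of_hasCompactSupport
        ((hΨ'c.norm.pow 2).mul continuous_id) ?_).integrableOn
      exact HasCompactSupport.intro hcs.deriv
        (fun x hx => by simp [image_eq_zero_of_notMem_tsupport hx])
    have hAint : IntegrableOn (fun r => ‖Ψ r‖^2 * r^(-β)) (Ioi 0) := by
      have hsub : Icc a b' ⊆ Ioi 0 := fun x hx => lt_of_lt_of_le ha0 hx.1
      have hco : ContinuousOn (fun r : ℝ => ‖Ψ r‖^2 * r^(-β)) (Icc a b') :=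
        ((hΨc.norm.pow 2).continuousOn).mul
          (ContinuousOn.rpow_const continuousOn_id (fun x hx => Or.inl (ne_of_gt (hsub hx))))
      have h1 : IntegrableOn (fun r : ℝ => ‖Ψ r‖^2 * r^(-β)) (Icc a b') :=
        hco.integrableOn_compact isCompact_Icc
      have h2 : IntegrableOn (fun r : ℝ => ‖Ψ r‖^2 * r^(-β)) (Ioi 0 \ Icc a b') := by
        rw [integrableOn_congr_fun (g := fun _ => (0:ℝ)) ?_ (measurableSet_Ioi.diff measurableSet_Icc)]
        · exact integrableOn_zero
        · intro x hx
          have hxK : x ∉ tsupport Ψ := by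
            intro hK
            exact hx.2 ⟨haK x hK, le_trans (hbK x hK) (by rw [hb'_def]; linarith)⟩
          simp [image_eq_zero_of_notMem_tsupport hxK]
      exact (h2.union h1).mono_set (fun x hx => by
        by_cases hxI : x ∈ Icc a b'
        · exact Or.inr hxI
        · exact Or.inl ⟨hx, hxI⟩)
    -- FTC
    have hFTC : ‖Ψ r₀‖^2 ≤ 2 * ∫ x in Ioc r₀ b', ‖Ψ x‖ * ‖deriv Ψ x‖ := by
      have hg' : ∀ x : ℝ, HasDerivAt (fun t => ‖Ψ t‖^2) (2 * ⟪Ψ x, deriv Ψ x⟫) x := by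
        intro x
        have h1 : HasDerivAt Ψ (deriv Ψ x) x := (hΨd x).hasDerivAt
        have h2 := HasDerivAt.inner ℝ h1 h1
        simp only [real_inner_self_eq_norm_sq] at h2
        rw [real_inner_comm (Ψ x) (deriv Ψ x), ← two_mul] at h2
        exact h2
      have hic : Continuous fun x => 2 * ⟪Ψ x, deriv Ψ x⟫ :=
        continuous_const.mul (hΨc.inner hΨ'c)
      have hFTC0 : ∫ x in r₀..b', 2 * ⟪Ψ x, deriv Ψ x⟫ = ‖Ψ b'‖^2 - ‖Ψ r₀‖^2 :=
        intervalIntegral.integral_eq_sub_of_hasDerivAt (fun x _ => hg' x)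
          (hic.intervalIntegrable _ _)
      have e1 : ‖Ψ r₀‖^2 = ∫ x in Ioc r₀ b', (-(2 * ⟪Ψ x, deriv Ψ x⟫)) := by
        rw [← intervalIntegral.integral_of_le hr₀b'.le, intervalIntegral.integral_neg, hFTC0,
          hΨ0 b' le_rfl]
        simp
      rw [e1, ← MeasureTheory.integral_const_mul]
      apply setIntegral_mono_on
      · exact (hic.neg).integrableOn_Ioc
      · exact (continuous_const.mul (hΨc.norm.mul hΨ'c.norm)).integrableOn_Ioc
      · exact measurableSet_Ioc
      · intro x hx
        have h3 := abs_real_inner_le_norm (Ψ x) (deriv Ψ x)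
        have h4 := neg_abs_le (⟪Ψ x, deriv Ψ x⟫)
        linarith
    -- CS bound (a)
    have hIa : ∫ x in Ioc r₀ b', ‖Ψ x‖ * ‖deriv Ψ x‖ ≤
        Real.sqrt M * (Real.sqrt (r₀^(-(2*β))/(2*β)) * Real.sqrt D) := by
      set u : ℝ → ℝ := fun x => x ^ (-β - 1/2) with hu_def
      set v : ℝ → ℝ := fun x => ‖deriv Ψ x‖ * x ^ ((1:ℝ)/2) with hv_def
      have hpt : ∀ x ∈ Ioc r₀ b', ‖Ψ x‖ * ‖deriv Ψ x‖ ≤ Real.sqrt M * (u x * v x) := by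
        intro x hx
        have hx0 : (0:ℝ) < x := lt_trans hr₀pos hx.1
        have h1 : ‖Ψ x‖^2 * x^(2*β) ≤ M := hr₀ x
        have h2 : ‖Ψ x‖ ≤ Real.sqrt M * x^(-β) := by
          have e2 : (x^(-β))^2 = x^(-(2*β)) := by
            rw [← Real.rpow_natCast (x^(-β)) 2, ← Real.rpow_mul hx0.le]
            congr 1; push_cast; ring
          have h3 : ‖Ψ x‖^2 ≤ M * x^(-(2*β)) := by
            have h4 : x^(2*β) * x^(-(2*β)) = 1 := by
              rw [← Real.rpow_add hx0, show 2*β + -(2*β) = 0 from by ring, Real.rpow_zero]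
            have h5 : 0 ≤ x^(-(2*β)) := Real.rpow_nonneg hx0.le _
            calc ‖Ψ x‖^2 = ‖Ψ x‖^2 * x^(2*β) * x^(-(2*β)) := by
                  rw [mul_assoc, h4, mul_one]
              _ ≤ M * x^(-(2*β)) := mul_le_mul_of_nonneg_right h1 h5
          calc ‖Ψ x‖ = Real.sqrt (‖Ψ x‖^2) := (Real.sqrt_sq (norm_nonneg _)).symm
            _ ≤ Real.sqrt (M * x^(-(2*β))) := Real.sqrt_le_sqrt h3
            _ = Real.sqrt M * x^(-β) := by
                rw [← e2, Real.sqrt_mul hM0, Real.sqrt_sq (Real.rpow_nonneg hx0.le _)]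
        have e6 : x^(-β) = u x * x^((1:ℝ)/2) := by
          simp only [hu_def]
          rw [← Real.rpow_add hx0]
          congr 1; ring
        calc ‖Ψ x‖ * ‖deriv Ψ x‖ ≤ (Real.sqrt M * x^(-β)) * ‖deriv Ψ x‖ :=
              mul_le_mul_of_nonneg_right h2 (norm_nonneg _)
          _ = Real.sqrt M * (u x * v x) := by simp only [hv_def]; rw [e6]; ring
      have hucont : ContinuousOn u (Icc r₀ b') :=
        ContinuousOn.rpow_const continuousOn_id
          (fun x hx => Or.inl (ne_of_gt (lt_of_lt_of_le hr₀pos hx.1)))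
      have hvcont : ContinuousOn v (Icc r₀ b') :=
        (hΨ'c.norm.continuousOn).mul
          (ContinuousOn.rpow_const continuousOn_id
            (fun x hx => Or.inl (ne_of_gt (lt_of_lt_of_le hr₀pos hx.1))))
      have hu0 : ∀ x ∈ Ioc r₀ b', 0 ≤ u x :=
        fun x hx => Real.rpow_nonneg (le_of_lt (lt_trans hr₀pos hx.1)) _
      have hv0 : ∀ x ∈ Ioc r₀ b', 0 ≤ v x :=
        fun x hx => mul_nonneg (norm_nonneg _)
          (Real.rpow_nonneg (le_of_lt (lt_trans hr₀pos hx.1)) _)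
      have hInt1 : ∫ x in Ioc r₀ b', ‖Ψ x‖ * ‖deriv Ψ x‖ ≤
          ∫ x in Ioc r₀ b', Real.sqrt M * (u x * v x) := by
        apply setIntegral_mono_on (hΨc.norm.mul hΨ'c.norm).integrableOn_Ioc ?_
          measurableSet_Ioc hpt
        exact ((continuousOn_const.mul (hucont.mul hvcont)).integrableOn_compact
          isCompact_Icc).mono_set Ioc_subset_Icc_self
      have hCS := cs_on_Ioc hr₀pos hr₀b'.le hucont hvcont hu0 hv0
      have hu2 : ∫ x in Ioc r₀ b', u x ^ 2 ≤ r₀^(-(2*β))/(2*β) := by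
        have e7 : ∀ x ∈ Ioc r₀ b', u x ^ 2 = x ^ (-(2*β)-1) := by
          intro x hx
          have hx0 : (0:ℝ) < x := lt_trans hr₀pos hx.1
          simp only [hu_def]
          rw [← Real.rpow_natCast (x ^ (-β-1/2)) 2, ← Real.rpow_mul hx0.le]
          congr 1; push_cast; ring
        rw [setIntegral_congr_fun measurableSet_Ioc e7, ← intervalIntegral.integral_of_le hr₀b'.le]
        have e8 := integral_rpow (a := r₀) (b := b') (r := -(2*β)-1)
          (Or.inr ⟨by intro hc; linarith,
            Set.notMem_uIcc_of_lt hr₀pos (lt_trans hr₀pos hr₀b')⟩)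
        rw [show -(2*β)-1+1 = -(2*β) from by ring] at e8
        rw [e8, div_neg, ← neg_div, neg_sub]
        have h9 : 0 ≤ b' ^ (-(2*β)) :=
          Real.rpow_nonneg (le_of_lt (lt_trans hr₀pos hr₀b')) _
        have h10 : (0:ℝ) < 2*β := by linarith
        rw [div_le_div_iff_of_pos_right h10]
        linarith
      have hv2 : ∫ x in Ioc r₀ b', v x ^ 2 ≤ D := by
        have e9 : ∀ x ∈ Ioc r₀ b', v x ^ 2 = ‖deriv Ψ x‖^2 * x := by
          intro x hx
          have hx0 : (0:ℝ) < x := lt_trans hr₀pos hx.1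
          simp only [hv_def]
          rw [mul_pow, ← Real.rpow_natCast (x ^ ((1:ℝ)/2)) 2, ← Real.rpow_mul hx0.le]
          norm_num
        rw [setIntegral_congr_fun measurableSet_Ioc e9]
        apply setIntegral_mono_set hDint ?_ (HasSubset.Subset.eventuallyLE hIocsub)
        exact (ae_restrict_iff' measurableSet_Ioi).2 (Filter.Eventually.of_forall
          (fun x hx => mul_nonneg (by positivity) (le_of_lt hx)))
      calc ∫ x in Ioc r₀ b', ‖Ψ x‖ * ‖deriv Ψ x‖
          ≤ ∫ x in Ioc r₀ b', Real.sqrt M * (u x * v x) := hInt1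
        _ = Real.sqrt M * ∫ x in Ioc r₀ b', u x * v x := MeasureTheory.integral_const_mul _ _
        _ ≤ Real.sqrt M * (Real.sqrt (∫ x in Ioc r₀ b', u x ^ 2) *
              Real.sqrt (∫ x in Ioc r₀ b', v x ^ 2)) :=
            mul_le_mul_of_nonneg_left hCS (Real.sqrt_nonneg M)
        _ ≤ Real.sqrt M * (Real.sqrt (r₀^(-(2*β))/(2*β)) * Real.sqrt D) := by
            apply mul_le_mul_of_nonneg_left ?_ (Real.sqrt_nonneg M)
            exact mul_le_mul (Real.sqrt_le_sqrt hu2) (Real.sqrt_le_sqrt hv2)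
              (Real.sqrt_nonneg _) (Real.sqrt_nonneg _)
    -- CS bound (b)
    have hIb : ∫ x in Ioc r₀ b', ‖Ψ x‖ * ‖deriv Ψ x‖ ≤
        r₀⁻¹ * (Real.sqrt B * Real.sqrt D) := by
      set u : ℝ → ℝ := fun x => ‖Ψ x‖ * x ^ ((1:ℝ)/2) with hu_def
      set v : ℝ → ℝ := fun x => ‖deriv Ψ x‖ * x ^ ((1:ℝ)/2) with hv_def
      have hpt : ∀ x ∈ Ioc r₀ b', ‖Ψ x‖ * ‖deriv Ψ x‖ ≤ r₀⁻¹ * (u x * v x) := by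
        intro x hx
        have hx0 : (0:ℝ) < x := lt_trans hr₀pos hx.1
        have ex : x ^ ((1:ℝ)/2) * x ^ ((1:ℝ)/2) = x := by
          rw [← Real.rpow_add hx0]; norm_num
        have h1 : 1 ≤ r₀⁻¹ * x := by
          rw [← div_eq_inv_mul, le_div_iff₀ hr₀pos, one_mul]; exact hx.1.le
        calc ‖Ψ x‖ * ‖deriv Ψ x‖ = ‖Ψ x‖ * ‖deriv Ψ x‖ * 1 := (mul_one _).symm
          _ ≤ ‖Ψ x‖ * ‖deriv Ψ x‖ * (r₀⁻¹ * x) :=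
              mul_le_mul_of_nonneg_left h1 (by positivity)
          _ = r₀⁻¹ * (u x * v x) := by
              simp only [hu_def, hv_def]
              rw [show (‖Ψ x‖ * x ^ ((1:ℝ)/2)) * (‖deriv Ψ x‖ * x ^ ((1:ℝ)/2)) =
                ‖Ψ x‖ * ‖deriv Ψ x‖ * (x ^ ((1:ℝ)/2) * x ^ ((1:ℝ)/2)) from by ring, ex]
              ring
      have hrc : ∀ x ∈ Icc r₀ b', x ≠ 0 ∨ (0:ℝ) ≤ (1:ℝ)/2 :=
        fun x hx => Or.inl (ne_of_gt (lt_of_lt_of_le hr₀pos hx.1))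
      have hucont : ContinuousOn u (Icc r₀ b') :=
        (hΨc.norm.continuousOn).mul (ContinuousOn.rpow_const continuousOn_id hrc)
      have hvcont : ContinuousOn v (Icc r₀ b') :=
        (hΨ'c.norm.continuousOn).mul (ContinuousOn.rpow_const continuousOn_id hrc)
      have hu0 : ∀ x ∈ Ioc r₀ b', 0 ≤ u x :=
        fun x hx => mul_nonneg (norm_nonneg _)
          (Real.rpow_nonneg (le_of_lt (lt_trans hr₀pos hx.1)) _)
      have hv0 : ∀ x ∈ Ioc r₀ b', 0 ≤ v x :=
        fun x hx => mul_nonneg (norm_nonneg _)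
          (Real.rpow_nonneg (le_of_lt (lt_trans hr₀pos hx.1)) _)
      have hInt1 : ∫ x in Ioc r₀ b', ‖Ψ x‖ * ‖deriv Ψ x‖ ≤
          ∫ x in Ioc r₀ b', r₀⁻¹ * (u x * v x) := by
        apply setIntegral_mono_on (hΨc.norm.mul hΨ'c.norm).integrableOn_Ioc ?_
          measurableSet_Ioc hpt
        exact ((continuousOn_const.mul (hucont.mul hvcont)).integrableOn_compact
          isCompact_Icc).mono_set Ioc_subset_Icc_self
      have hCS := cs_on_Ioc hr₀pos hr₀b'.le hucont hvcont hu0 hv0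
      have hsq : ∀ (w : ℝ → ℝ), (∀ x ∈ Ioc r₀ b', (w x * x ^ ((1:ℝ)/2))^2 = w x ^2 * x) := by
        intro w x hx
        have hx0 : (0:ℝ) < x := lt_trans hr₀pos hx.1
        rw [mul_pow, ← Real.rpow_natCast (x ^ ((1:ℝ)/2)) 2, ← Real.rpow_mul hx0.le]
        norm_num
      have hu2 : ∫ x in Ioc r₀ b', u x ^ 2 ≤ B := by
        rw [setIntegral_congr_fun measurableSet_Ioc (fun x hx => hsq (fun y => ‖Ψ y‖) x hx)]
        apply setIntegral_mono_set hBint ?_ (HasSubset.Subset.eventuallyLE hIocsub)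
        exact (ae_restrict_iff' measurableSet_Ioi).2 (Filter.Eventually.of_forall
          (fun x hx => mul_nonneg (by positivity) (le_of_lt hx)))
      have hv2 : ∫ x in Ioc r₀ b', v x ^ 2 ≤ D := by
        rw [setIntegral_congr_fun measurableSet_Ioc
          (fun x hx => hsq (fun y => ‖deriv Ψ y‖) x hx)]
        apply setIntegral_mono_set hDint ?_ (HasSubset.Subset.eventuallyLE hIocsub)
        exact (ae_restrict_iff' measurableSet_Ioi).2 (Filter.Eventually.of_forall
          (fun x hx => mul_nonneg (by positivity) (le_of_lt hx)))
      calc ∫ x in Ioc r₀ b', ‖Ψ x‖ * ‖deriv Ψ x‖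
          ≤ ∫ x in Ioc r₀ b', r₀⁻¹ * (u x * v x) := hInt1
        _ = r₀⁻¹ * ∫ x in Ioc r₀ b', u x * v x := MeasureTheory.integral_const_mul _ _
        _ ≤ r₀⁻¹ * (Real.sqrt (∫ x in Ioc r₀ b', u x ^ 2) *
              Real.sqrt (∫ x in Ioc r₀ b', v x ^ 2)) :=
            mul_le_mul_of_nonneg_left hCS (inv_nonneg.2 hr₀pos.le)
        _ ≤ r₀⁻¹ * (Real.sqrt B * Real.sqrt D) := by
            apply mul_le_mul_of_nonneg_left ?_ (inv_nonneg.2 hr₀pos.le)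
            exact mul_le_mul (Real.sqrt_le_sqrt hu2) (Real.sqrt_le_sqrt hv2)
              (Real.sqrt_nonneg _) (Real.sqrt_nonneg _)
    -- bound (a) on M
    have hMeq : M = ‖Ψ r₀‖^2 * r₀^(2*β) := by simp only [hM_def, hh_def]
    have h2βpos : (0:ℝ) < 2*β := by linarith
    have hsqβ : Real.sqrt (2*β) > 0 := Real.sqrt_pos.2 h2βpos
    have e1 : Real.sqrt (2*β) * Real.sqrt (2*β) = 2*β := Real.mul_self_sqrt h2βpos.le
    have e2 : Real.sqrt D * Real.sqrt D = D := Real.mul_self_sqrt hD0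
    have eM : Real.sqrt M * Real.sqrt M = M := Real.mul_self_sqrt hM0
    have e3 : r₀^β * r₀^β = r₀^(2*β) := by
      rw [← Real.rpow_add hr₀pos]; congr 1; ring
    have hMa : M ≤ (2/β) * D * r₀^(2*β) := by
      have es : Real.sqrt (r₀^(-(2*β))/(2*β)) = r₀^(-β) / Real.sqrt (2*β) := by
        rw [show r₀^(-(2*β)) = (r₀^(-β))^2 from ?_, Real.sqrt_div (sq_nonneg _),
          Real.sqrt_sq (Real.rpow_nonneg hr₀pos.le _)]
        rw [← Real.rpow_natCast (r₀^(-β)) 2, ← Real.rpow_mul hr₀pos.le]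
        congr 1; push_cast; ring
      have er : r₀^(-β) * r₀^(2*β) = r₀^β := by
        rw [← Real.rpow_add hr₀pos]; congr 1; ring
      have key : M ≤ 2 * Real.sqrt M * Real.sqrt D * r₀^β / Real.sqrt (2*β) := by
        calc M = ‖Ψ r₀‖^2 * r₀^(2*β) := hMeq
          _ ≤ (2 * (Real.sqrt M * (Real.sqrt (r₀^(-(2*β))/(2*β)) * Real.sqrt D))) * r₀^(2*β) := by
              apply mul_le_mul_of_nonneg_right ?_ (Real.rpow_nonneg hr₀pos.le _)
              calc ‖Ψ r₀‖^2 ≤ 2 * ∫ x in Ioc r₀ b', ‖Ψ x‖ * ‖deriv Ψ x‖ := hFTC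
                _ ≤ 2 * (Real.sqrt M * (Real.sqrt (r₀^(-(2*β))/(2*β)) * Real.sqrt D)) := by
                    linarith [hIa]
          _ = 2 * Real.sqrt M * Real.sqrt D * (r₀^(-β) * r₀^(2*β)) / Real.sqrt (2*β) := by
              rw [es]; ring
          _ = 2 * Real.sqrt M * Real.sqrt D * r₀^β / Real.sqrt (2*β) := by rw [er]
      have key2 : M * Real.sqrt (2*β) ≤ 2 * Real.sqrt M * Real.sqrt D * r₀^β :=
        (le_div_iff₀ hsqβ).1 key
      have key3 := mul_self_le_mul_self (by positivity) key2
      have eL : (M * Real.sqrt (2*β)) * (M * Real.sqrt (2*β)) = M*M*(2*β) := by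
        rw [show (M * Real.sqrt (2*β)) * (M * Real.sqrt (2*β)) =
          M*M*(Real.sqrt (2*β) * Real.sqrt (2*β)) from by ring, e1]
      have eR : (2 * Real.sqrt M * Real.sqrt D * r₀^β) * (2 * Real.sqrt M * Real.sqrt D * r₀^β)
          = 4*(M*(D*r₀^(2*β))) := by
        rw [show (2 * Real.sqrt M * Real.sqrt D * r₀^β) * (2 * Real.sqrt M * Real.sqrt D * r₀^β)
          = 4*((Real.sqrt M * Real.sqrt M)*((Real.sqrt D * Real.sqrt D)*(r₀^β * r₀^β)))
          from by ring, eM, e2, e3]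
      rw [eL, eR] at key3
      rw [div_mul_eq_mul_div, div_mul_eq_mul_div, le_div_iff₀ hβ0]
      have key4 : ∀ m d r : ℝ, 0 < m → m*m*(2*β) ≤ 4*(m*(d*r)) → m*β ≤ 2*d*r := by
        intro m d r hm hk; nlinarith [hk, hm, mul_pos hm hm]
      exact key4 M D (r₀^(2*β)) hM key3
    -- bound (b) on M
    have hMb : M ≤ 2 * r₀^(2*β-1) * (Real.sqrt B * Real.sqrt D) := by
      have er : r₀^(2*β) * r₀⁻¹ = r₀^(2*β-1) := by
        rw [show r₀⁻¹ = r₀^(-1:ℝ) from (Real.rpow_neg_one r₀).symm, ← Real.rpow_add hr₀pos,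
          show 2*β + -1 = 2*β - 1 from by ring]
      calc M = ‖Ψ r₀‖^2 * r₀^(2*β) := hMeq
        _ ≤ (2 * (r₀⁻¹ * (Real.sqrt B * Real.sqrt D))) * r₀^(2*β) := by
            apply mul_le_mul_of_nonneg_right ?_ (Real.rpow_nonneg hr₀pos.le _)
            calc ‖Ψ r₀‖^2 ≤ 2 * ∫ x in Ioc r₀ b', ‖Ψ x‖ * ‖deriv Ψ x‖ := hFTC
              _ ≤ 2 * (r₀⁻¹ * (Real.sqrt B * Real.sqrt D)) := by linarith [hIb]
        _ = 2 * (r₀^(2*β) * r₀⁻¹) * (Real.sqrt B * Real.sqrt D) := by ring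
        _ = 2 * r₀^(2*β-1) * (Real.sqrt B * Real.sqrt D) := by rw [er]
    have hDpos : 0 < D := by
      by_contra hD
      push_neg at hD
      have h1 : (2/β) * D * r₀^(2*β) ≤ 0 := by
        have hp := Real.rpow_pos_of_pos hr₀pos (2*β)
        have h2β : 0 < 2/β := div_pos two_pos hβ0
        nlinarith [mul_nonneg (mul_nonneg (le_of_lt h2β) (neg_nonneg.2 hD)) hp.le]
      linarith [hMa]
    -- interpolation
    have hM_final : M ≤ (2/β) ^ (1-2*β) * (2:ℝ) ^ (2*β) * (B^β * D^(1-β)) := by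
      have h12β : (0:ℝ) ≤ 1-2*β := by linarith
      have hc1 : (0:ℝ) ≤ 2/β := by positivity
      have hXnn : (0:ℝ) ≤ (2/β)*D*r₀^(2*β) :=
        mul_nonneg (mul_nonneg hc1 hD0) (Real.rpow_nonneg hr₀pos.le _)
      have step1 : M ≤ ((2/β)*D*r₀^(2*β))^(1-2*β) *
          (2*r₀^(2*β-1)*(Real.sqrt B*Real.sqrt D))^(2*β) := by
        calc M = M^(1-2*β) * M^(2*β) := by
              rw [← Real.rpow_add hM, show 1-2*β+2*β = 1 from by ring, Real.rpow_one]
          _ ≤ _ := mul_le_mul (Real.rpow_le_rpow hM0 hMa h12β)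
              (Real.rpow_le_rpow hM0 hMb (by linarith))
              (Real.rpow_nonneg hM0 _) (Real.rpow_nonneg hXnn _)
      refine le_trans step1 (le_of_eq ?_)
      rw [Real.mul_rpow (mul_nonneg hc1 hD0) (Real.rpow_nonneg hr₀pos.le _),
          Real.mul_rpow hc1 hD0,
          Real.mul_rpow (mul_nonneg two_pos.le (Real.rpow_nonneg hr₀pos.le _))
            (mul_nonneg (Real.sqrt_nonneg _) (Real.sqrt_nonneg _)),
          Real.mul_rpow two_pos.le (Real.rpow_nonneg hr₀pos.le _),
          Real.mul_rpow (Real.sqrt_nonneg _) (Real.sqrt_nonneg _),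
          ← Real.rpow_mul hr₀pos.le, ← Real.rpow_mul hr₀pos.le,
          Real.sqrt_eq_rpow, Real.sqrt_eq_rpow,
          ← Real.rpow_mul hB0, ← Real.rpow_mul hD0,
          show (1:ℝ)/2*(2*β) = β from by ring]
      have er : r₀^(2*β*(1-2*β)) * r₀^((2*β-1)*(2*β)) = 1 := by
        rw [← Real.rpow_add hr₀pos, show 2*β*(1-2*β)+(2*β-1)*(2*β) = 0 from by ring,
          Real.rpow_zero]
      have ed : D^(1-2*β) * D^β = D^(1-β) := by
        rw [← Real.rpow_add hDpos, show 1-2*β+β = 1-β from by ring]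
      calc (2/β)^(1-2*β) * D^(1-2*β) * r₀^(2*β*(1-2*β)) *
            ((2:ℝ)^(2*β) * r₀^((2*β-1)*(2*β)) * (B^β * D^β))
          = (2/β)^(1-2*β) * (2:ℝ)^(2*β) * (B^β * (D^(1-2*β) * D^β)) *
            (r₀^(2*β*(1-2*β)) * r₀^((2*β-1)*(2*β))) := by ring
        _ = (2/β)^(1-2*β) * (2:ℝ)^(2*β) * (B^β * D^(1-β)) := by rw [er, ed, mul_one]
    -- conclusion
    have hLHS : (∫ r in Ioi (0 : ℝ), ‖Ψ r‖ ^ 4 * r ^ β) ≤ A * M := by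
      have hpt : ∀ r ∈ Ioi (0:ℝ), ‖Ψ r‖^4 * r^β ≤ (‖Ψ r‖^2*r^(-β)) * M := by
        intro r hr
        have hr0 : (0:ℝ) < r := hr
        have h1 : ‖Ψ r‖^2 * r^(2*β) ≤ M := hr₀ r
        have e : ‖Ψ r‖^4 * r^β = (‖Ψ r‖^2*r^(-β)) * (‖Ψ r‖^2*r^(2*β)) := by
          rw [show (‖Ψ r‖^2*r^(-β)) * (‖Ψ r‖^2*r^(2*β)) = ‖Ψ r‖^4 * (r^(-β)*r^(2*β)) from by
            ring, ← Real.rpow_add hr0, show -β+2*β = β from by ring]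
        rw [e]
        exact mul_le_mul_of_nonneg_left h1
          (mul_nonneg (by positivity) (Real.rpow_nonneg hr0.le _))
      calc (∫ r in Ioi (0 : ℝ), ‖Ψ r‖ ^ 4 * r ^ β)
          ≤ ∫ r in Ioi (0:ℝ), (‖Ψ r‖^2*r^(-β))*M := by
            apply integral_mono_of_nonneg
            · exact (ae_restrict_iff' measurableSet_Ioi).2 (Filter.Eventually.of_forall
                (fun x hx => mul_nonneg (by positivity) (Real.rpow_nonneg (le_of_lt hx) _)))
            · exact hAint.mul_const M
            · exact (ae_restrict_iff' measurableSet_Ioi).2 (Filter.Eventually.of_forall hpt)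
        _ = A * M := by rw [MeasureTheory.integral_mul_const, ← hA_def]
    calc (∫ r in Ioi (0 : ℝ), ‖Ψ r‖ ^ 4 * r ^ β) ≤ A * M := hLHS
      _ ≤ A * ((2/β) ^ (1-2*β) * (2:ℝ) ^ (2*β) * (B^β * D^(1-β))) :=
          mul_le_mul_of_nonneg_left hM_final hA0
      _ = (2/β) ^ (1-2*β) * (2:ℝ) ^ (2*β) * A * B ^ β * D ^ (1-β) := by ring
end
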